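/- arXiv:2212.06806 — 4 statements merged into one kernel-verified Lean document; each statement's English description precedes it below -/
import Mathlib

section
/- Let X be a nonnegative integer-valued random variable. Then for every k ∈ ℕ and every real R ≥ 2k, E[ X^k · 1_{X ≥ R} ] ≤ E[(X)_k] · exp( k²/(2R) + k³/(3R²) ), where (X)_k = X(X−1)⋯(X−k+1) is the falling factorial. -/
open MeasureTheory Finset
open scoped ENNReal

lemma aux_scalar {x : ℝ} (hx0 : 0 ≤ x) (hx : x ≤ 1/2) :
    1 ≤ (1 - x) * Real.exp (x + x^2) := by
  have hq := Real.quadratic_le_exp_of_nonneg (x := x + x^2) (by positivity)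
  have h1 : (1:ℝ) ≤ (1 - x) * (1 + (x + x^2) + (x + x^2)^2 / 2) := by nlinarith
  have h2 : (0:ℝ) ≤ 1 - x := by linarith
  nlinarith [Real.exp_pos (x + x^2)]

lemma aux_sum_id (k : ℕ) : ∑ i ∈ range k, (i:ℝ) ≤ (k:ℝ)^2 / 2 := by
  induction k with
  | zero => simp
  | succ n ih =>
    rw [Finset.sum_range_succ]
    push_cast
    nlinarith [ih]

lemma aux_sum_sq (k : ℕ) : ∑ i ∈ range k, (i:ℝ)^2 ≤ (k:ℝ)^3 / 3 := by
  induction k with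
  | zero => simp
  | succ n ih =>
    rw [Finset.sum_range_succ]
    push_cast
    have : ((n:ℝ)+1)^3 = (n:ℝ)^3+3*(n:ℝ)^2+3*(n:ℝ)+1 := by ring
    nlinarith [ih]

lemma aux_pointwise (n k : ℕ) (hk : 1 ≤ k) (R : ℝ) (hR : 2 * (k : ℝ) ≤ R)
    (hn : R ≤ (n : ℝ)) :
    (n : ℝ)^k ≤ (n.descFactorial k : ℝ) *
      Real.exp ((k : ℝ) ^ 2 / (2 * R) + (k : ℝ) ^ 3 / (3 * R ^ 2)) := by
  have hRpos : (0:ℝ) < R := by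
    have : (0:ℝ) < 2 * k := by positivity
    linarith
  have hnpos : (0:ℝ) < n := lt_of_lt_of_le hRpos hn
  -- per-factor bound
  have key : ∀ i ∈ range k, (n:ℝ) ≤ ((n - i : ℕ) : ℝ) * Real.exp ((i:ℝ)/R + (i:ℝ)^2/R^2) := by
    intro i hi
    rw [Finset.mem_range] at hi
    have hik : (i:ℝ) + 1 ≤ (k:ℝ) := by exact_mod_cast hi
    have hx0 : (0:ℝ) ≤ (i:ℝ)/n := by positivity
    have hin : 2 * (i:ℝ) ≤ n := by
      have : 2 * (i:ℝ) + 2 ≤ 2 * k := by linarith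
      linarith
    have hx : (i:ℝ)/n ≤ 1/2 := by
      rw [div_le_div_iff₀ hnpos (by norm_num)]
      linarith
    have h := aux_scalar hx0 hx
    have hcast : ((n - i : ℕ) : ℝ) = (n:ℝ) - (i:ℝ) := by
      have : i ≤ n := by
        have : (i:ℝ) ≤ n := by linarith
        exact_mod_cast this
      push_cast [this]; ring
    have hmul : (n:ℝ) ≤ ((n:ℝ) - i) * Real.exp ((i:ℝ)/n + ((i:ℝ)/n)^2) := by
      have := mul_le_mul_of_nonneg_left h hnpos.le
      calc (n:ℝ) = n * 1 := by ring
        _ ≤ n * ((1 - (i:ℝ)/n) * Real.exp ((i:ℝ)/n + ((i:ℝ)/n)^2)) := this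
        _ = ((n:ℝ) - i) * Real.exp ((i:ℝ)/n + ((i:ℝ)/n)^2) := by
            field_simp
    have hexp : Real.exp ((i:ℝ)/n + ((i:ℝ)/n)^2) ≤ Real.exp ((i:ℝ)/R + (i:ℝ)^2/R^2) := by
      apply Real.exp_le_exp.2
      have h1 : (i:ℝ)/n ≤ (i:ℝ)/R := by
        apply div_le_div_of_nonneg_left (by positivity) hRpos hn
      have h2 : ((i:ℝ)/n)^2 ≤ (i:ℝ)^2/R^2 := by
        rw [div_pow]
        apply div_le_div_of_nonneg_left (by positivity) (by positivity)
        exact pow_le_pow_left₀ hRpos.le hn 2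
      linarith
    rw [hcast]
    calc (n:ℝ) ≤ ((n:ℝ) - i) * Real.exp ((i:ℝ)/n + ((i:ℝ)/n)^2) := hmul
      _ ≤ ((n:ℝ) - i) * Real.exp ((i:ℝ)/R + (i:ℝ)^2/R^2) := by
          apply mul_le_mul_of_nonneg_left hexp
          linarith
  have hprod : (n:ℝ)^k ≤ ∏ i ∈ range k, (((n - i : ℕ) : ℝ) * Real.exp ((i:ℝ)/R + (i:ℝ)^2/R^2)) := by
    calc (n:ℝ)^k = ∏ _i ∈ range k, (n:ℝ) := by rw [Finset.prod_const, Finset.card_range]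
      _ ≤ _ := Finset.prod_le_prod (fun i _ => by positivity) key
  rw [Finset.prod_mul_distrib, ← Real.exp_sum] at hprod
  have hdesc : (∏ i ∈ range k, ((n - i : ℕ) : ℝ)) = (n.descFactorial k : ℝ) := by
    rw [Nat.descFactorial_eq_prod_range]
    push_cast
    rfl
  have hsum : ∑ i ∈ range k, ((i:ℝ)/R + (i:ℝ)^2/R^2) ≤ (k : ℝ) ^ 2 / (2 * R) + (k : ℝ) ^ 3 / (3 * R ^ 2) := by
    rw [Finset.sum_add_distrib, ← Finset.sum_div, ← Finset.sum_div]
    have h1 := aux_sum_id k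
    have h2 := aux_sum_sq k
    have e1 : (k:ℝ)^2 / (2*R) = ((k:ℝ)^2/2) / R := by ring
    have e2 : (k:ℝ)^3 / (3*R^2) = ((k:ℝ)^3/3) / R^2 := by ring
    rw [e1, e2]
    gcongr
  calc (n:ℝ)^k ≤ (∏ i ∈ range k, ((n - i : ℕ) : ℝ)) * Real.exp (∑ i ∈ range k, ((i:ℝ)/R + (i:ℝ)^2/R^2)) := hprod
    _ ≤ (n.descFactorial k : ℝ) * Real.exp ((k : ℝ) ^ 2 / (2 * R) + (k : ℝ) ^ 3 / (3 * R ^ 2)) := by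
        rw [hdesc]
        exact mul_le_mul_of_nonneg_left (Real.exp_le_exp.2 hsum) (by positivity)

/-- Lemma: for a nonnegative integer-valued random variable `X`, any `k ∈ ℕ` and real
`R ≥ 2k`, one has `E[X^k 1_{X ≥ R}] ≤ E[(X)_k] · exp(k²/(2R) + k³/(3R²))`, where
`(X)_k` is the falling factorial `X(X-1)⋯(X-k+1)` (`Nat.descFactorial`). Expectations
are interpreted in `[0,∞]` via `∫⁻`. -/
theorem truncated_poly_moment_le_descFactorial_moment
    {Ω : Type} [MeasurableSpace Ω] (P : Measure Ω) [IsProbabilityMeasure P]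
    (X : Ω → ℕ) (hX : Measurable X) (k : ℕ) (hk : 1 ≤ k) (R : ℝ) (hR : 2 * (k : ℝ) ≤ R) :
    ∫⁻ ω, (if R ≤ (X ω : ℝ) then ((X ω : ℝ≥0∞)) ^ k else 0) ∂P ≤
      (∫⁻ ω, ((X ω).descFactorial k : ℝ≥0∞) ∂P) *
        ENNReal.ofReal (Real.exp ((k : ℝ) ^ 2 / (2 * R) + (k : ℝ) ^ 3 / (3 * R ^ 2))) := by
  set C := ENNReal.ofReal (Real.exp ((k : ℝ) ^ 2 / (2 * R) + (k : ℝ) ^ 3 / (3 * R ^ 2))) with hC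
  have hpt : ∀ ω, (if R ≤ (X ω : ℝ) then ((X ω : ℝ≥0∞)) ^ k else 0) ≤
      ((X ω).descFactorial k : ℝ≥0∞) * C := by
    intro ω
    split_ifs with h
    · have hreal := aux_pointwise (X ω) k hk R hR h
      have : ((X ω : ℝ≥0∞)) ^ k = ENNReal.ofReal ((X ω : ℝ)^k) := by
        rw [ENNReal.ofReal_pow (by positivity), ENNReal.ofReal_natCast]
      rw [this, hC, ← ENNReal.ofReal_natCast ((X ω).descFactorial k), ← ENNReal.ofReal_mul (by positivity)]
      calc ENNReal.ofReal ((X ω : ℝ)^k)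
          ≤ ENNReal.ofReal (((X ω).descFactorial k : ℝ) * Real.exp ((k : ℝ) ^ 2 / (2 * R) + (k : ℝ) ^ 3 / (3 * R ^ 2))) :=
            ENNReal.ofReal_le_ofReal hreal
        _ = _ := rfl
    · exact zero_le
  calc ∫⁻ ω, (if R ≤ (X ω : ℝ) then ((X ω : ℝ≥0∞)) ^ k else 0) ∂P
      ≤ ∫⁻ ω, ((X ω).descFactorial k : ℝ≥0∞) * C ∂P := lintegral_mono hpt
    _ = (∫⁻ ω, ((X ω).descFactorial k : ℝ≥0∞) ∂P) * C := by
        exact lintegral_mul_const _ ((measurable_from_top (f := fun n : ℕ => ((n.descFactorial k : ℝ≥0∞)))).comp hX)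
end

section
/- Let X be a nonnegative integer-valued random variable. Then for every k ∈ ℕ and every real R > 0, E[X^k] ≥ ( E[(X)_k] − E[X^{2k}]^{1/2}·P(X > R)^{1/2} )·exp( k(k−1)/(2R) ), where (X)_k = X(X−1)⋯(X−k+1) is the falling factorial. -/
open MeasureTheory

lemma descFactorial_mul_exp_le (k : ℕ) (hk : 1 ≤ k) (R : ℝ) (hR : 0 < R) (n : ℕ)
    (hn : (n : ℝ) ≤ R) :
    (n.descFactorial k : ℝ) * Real.exp ((k : ℝ) * ((k : ℝ) - 1) / (2 * R)) ≤ (n : ℝ) ^ k := by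
  rcases lt_or_ge n k with h | h
  · rw [Nat.descFactorial_eq_zero_iff_lt.2 h]
    simp only [Nat.cast_zero, zero_mul]
    positivity
  have hn1 : 1 ≤ n := le_trans hk h
  have hnpos : (0 : ℝ) < n := by exact_mod_cast hn1
  have hd : (n.descFactorial k : ℝ) = ∏ i ∈ Finset.range k, ((n : ℝ) - i) := by
    rw [Nat.descFactorial_eq_prod_range, Nat.cast_prod]
    refine Finset.prod_congr rfl fun i hi => ?_
    have hik : i ≤ n := le_trans (le_of_lt (Finset.mem_range.1 hi)) h
    push_cast [Nat.cast_sub hik]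
    ring
  have hsum : ∑ i ∈ Finset.range k, (i : ℝ) = (k : ℝ) * ((k : ℝ) - 1) / 2 := by
    have h2 : (∑ i ∈ Finset.range k, i) * 2 = k * (k - 1) := Finset.sum_range_id_mul_two k
    have h2' : ((∑ i ∈ Finset.range k, i : ℕ) : ℝ) * 2 = (k : ℝ) * ((k : ℝ) - 1) := by
      have hkk : ((k - 1 : ℕ) : ℝ) = (k : ℝ) - 1 := by
        rw [Nat.cast_sub hk]; norm_num
      rw [← hkk]
      exact_mod_cast congrArg (fun m : ℕ => (m : ℝ)) h2
    push_cast at h2'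
    linarith
  have step : (n.descFactorial k : ℝ) ≤
      (n : ℝ) ^ k * Real.exp (-((k : ℝ) * ((k : ℝ) - 1) / 2) / n) := by
    rw [hd]
    have : ∏ i ∈ Finset.range k, ((n : ℝ) - i) ≤
        ∏ i ∈ Finset.range k, ((n : ℝ) * Real.exp (-(i : ℝ) / n)) := by
      apply Finset.prod_le_prod
      · intro i hi
        have : (i : ℝ) ≤ n := by
          exact_mod_cast le_trans (le_of_lt (Finset.mem_range.1 hi)) h
        linarith
      · intro i hi
        have h1 : -(i : ℝ) / n + 1 ≤ Real.exp (-(i : ℝ) / n) := Real.add_one_le_exp _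
        have h2 : (n : ℝ) * (-(i : ℝ) / n + 1) ≤ (n : ℝ) * Real.exp (-(i : ℝ) / n) :=
          mul_le_mul_of_nonneg_left h1 hnpos.le
        have h3 : (n : ℝ) * (-(i : ℝ) / n + 1) = (n : ℝ) - i := by
          field_simp
          ring
        linarith
    refine le_trans this (le_of_eq ?_)
    rw [Finset.prod_mul_distrib, Finset.prod_const, ← Real.exp_sum, Finset.card_range]
    congr 1
    rw [← Finset.sum_div, Finset.sum_neg_distrib, hsum, neg_div]
  have hexp : Real.exp (-((k : ℝ) * ((k : ℝ) - 1) / 2) / n) ≤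
      Real.exp (-((k : ℝ) * ((k : ℝ) - 1) / (2 * R))) := by
    apply Real.exp_le_exp.2
    have hS : (0 : ℝ) ≤ (k : ℝ) * ((k : ℝ) - 1) / 2 := by
      have : (1 : ℝ) ≤ k := by exact_mod_cast hk
      nlinarith
    have h1 := div_le_div_of_nonneg_left hS hnpos hn
    have e1 : -((k : ℝ) * ((k : ℝ) - 1) / 2) / (n : ℝ) =
        -((k : ℝ) * ((k : ℝ) - 1) / 2 / n) := neg_div _ _
    have e2 : (k : ℝ) * ((k : ℝ) - 1) / 2 / R = (k : ℝ) * ((k : ℝ) - 1) / (2 * R) :=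
      div_div _ 2 R
    linarith
  have hfinal : (n.descFactorial k : ℝ) ≤
      (n : ℝ) ^ k * Real.exp (-((k : ℝ) * ((k : ℝ) - 1) / (2 * R))) := by
    refine le_trans step ?_
    exact mul_le_mul_of_nonneg_left hexp (by positivity)
  have hmul := mul_le_mul_of_nonneg_right hfinal
    (le_of_lt (Real.exp_pos ((k : ℝ) * ((k : ℝ) - 1) / (2 * R))))
  calc (n.descFactorial k : ℝ) * Real.exp ((k : ℝ) * ((k : ℝ) - 1) / (2 * R))
      ≤ (n : ℝ) ^ k * Real.exp (-((k : ℝ) * ((k : ℝ) - 1) / (2 * R))) *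
        Real.exp ((k : ℝ) * ((k : ℝ) - 1) / (2 * R)) := hmul
    _ = (n : ℝ) ^ k := by
        rw [mul_assoc, ← Real.exp_add, neg_add_cancel, Real.exp_zero, mul_one]

/-- Lemma: for a nonnegative integer-valued random variable `X` with `E[X^{2k}] < ∞`,
any `k ∈ ℕ` and real `R > 0`,
`E[X^k] ≥ (E[(X)_k] − E[X^{2k}]^{1/2} · P(X > R)^{1/2}) · exp(k(k−1)/(2R))`,
where `(X)_k` is the falling factorial `Nat.descFactorial X k`. -/
theorem poly_moment_ge_descFactorial_moment
    {Ω : Type} [MeasurableSpace Ω] (P : Measure Ω) [IsProbabilityMeasure P]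
    (X : Ω → ℕ) (hX : Measurable X) (k : ℕ) (hk : 1 ≤ k) (R : ℝ) (hR : 0 < R)
    (hInt : Integrable (fun ω => ((X ω : ℝ)) ^ (2 * k)) P) :
    ((∫ ω, ((X ω).descFactorial k : ℝ) ∂P) -
        Real.sqrt (∫ ω, ((X ω : ℝ)) ^ (2 * k) ∂P) *
          Real.sqrt ((P {ω | R < (X ω : ℝ)}).toReal)) *
      Real.exp ((k : ℝ) * ((k : ℝ) - 1) / (2 * R)) ≤
    ∫ ω, ((X ω : ℝ)) ^ k ∂P := by
  have hXm : Measurable fun ω => (X ω : ℝ) := measurable_from_top.comp hX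
  set S : Set Ω := {ω | R < (X ω : ℝ)} with hS
  have hA : MeasurableSet S := measurableSet_lt measurable_const hXm
  have hDFm : Measurable fun ω => ((X ω).descFactorial k : ℝ) :=
    (measurable_from_top : Measurable fun n : ℕ => ((n.descFactorial k : ℝ))).comp hX
  -- pointwise bounds
  have hbd1 : ∀ ω, ((X ω).descFactorial k : ℝ) ≤ (X ω : ℝ) ^ k := fun ω => by
    exact_mod_cast Nat.cast_le.2 ((X ω).descFactorial_le_pow k)
  have hbd2 : ∀ ω, (X ω : ℝ) ^ k ≤ 1 + (X ω : ℝ) ^ (2 * k) := fun ω => by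
    rcases Nat.eq_zero_or_pos (X ω) with h0 | h1
    · rw [h0]
      simp [zero_pow (by omega : k ≠ 0), zero_pow (by omega : 2 * k ≠ 0)]
    · have h1' : (1 : ℝ) ≤ (X ω : ℝ) := by exact_mod_cast h1
      have := pow_le_pow_right₀ h1' (by omega : k ≤ 2 * k)
      have h0' : (0 : ℝ) ≤ (X ω : ℝ) ^ (2 * k) := by positivity
      linarith
  -- integrability
  have hIk : Integrable (fun ω => (X ω : ℝ) ^ k) P := by
    refine Integrable.mono' ((integrable_const (1 : ℝ)).add hInt)
      (hXm.pow_const k).aestronglyMeasurable (Filter.Eventually.of_forall fun ω => ?_)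
    have h0 : (0 : ℝ) ≤ (X ω : ℝ) ^ k := by positivity
    rw [Real.norm_of_nonneg h0]
    exact hbd2 ω
  have hDF : Integrable (fun ω => ((X ω).descFactorial k : ℝ)) P := by
    refine Integrable.mono' hIk hDFm.aestronglyMeasurable
      (Filter.Eventually.of_forall fun ω => ?_)
    rw [Real.norm_of_nonneg (Nat.cast_nonneg _)]
    exact hbd1 ω
  -- split the integral of the descending factorial
  have hsplit : (∫ ω, ((X ω).descFactorial k : ℝ) ∂P) =
      (∫ ω in S, ((X ω).descFactorial k : ℝ) ∂P) +
      (∫ ω in Sᶜ, ((X ω).descFactorial k : ℝ) ∂P) :=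
    (integral_add_compl hA hDF).symm
  -- Cauchy-Schwarz bound for the integral over S
  have hCS : (∫ ω in S, ((X ω).descFactorial k : ℝ) ∂P) ≤
      Real.sqrt (∫ ω, ((X ω : ℝ)) ^ (2 * k) ∂P) * Real.sqrt ((P S).toReal) := by
    have h1 : (∫ ω in S, ((X ω).descFactorial k : ℝ) ∂P) ≤ ∫ ω in S, (X ω : ℝ) ^ k ∂P :=
      setIntegral_mono_on hDF.integrableOn hIk.integrableOn hA fun ω _ => hbd1 ω
    refine le_trans h1 ?_
    have heq : (∫ ω in S, (X ω : ℝ) ^ k ∂P) =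
        ∫ ω, (X ω : ℝ) ^ k * S.indicator (fun _ => (1 : ℝ)) ω ∂P := by
      rw [← integral_indicator hA]
      refine integral_congr_ae (Filter.Eventually.of_forall fun ω => ?_)
      by_cases hω : ω ∈ S <;> simp [Set.indicator_of_mem, Set.indicator_of_notMem, hω]
    rw [heq]
    have hpq : (2 : ℝ).HolderConjugate 2 := ⟨by norm_num, by norm_num, by norm_num⟩
    have hf2 : MemLp (fun ω => (X ω : ℝ) ^ k) (ENNReal.ofReal 2) P := by
      have : (ENNReal.ofReal 2) = 2 := by simp [ENNReal.ofReal_ofNat]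
      rw [this, memLp_two_iff_integrable_sq (hXm.pow_const k).aestronglyMeasurable]
      refine hInt.congr (Filter.Eventually.of_forall fun ω => ?_)
      exact pow_mul' (X ω : ℝ) 2 k
    have hg2 : MemLp (S.indicator (fun _ => (1 : ℝ))) (ENNReal.ofReal 2) P :=
      memLp_indicator_const _ hA 1 (Or.inr (measure_ne_top P S))
    have hH := integral_mul_le_Lp_mul_Lq_of_nonneg hpq
      (Filter.Eventually.of_forall fun ω => by positivity)
      (Filter.Eventually.of_forall fun ω => Set.indicator_nonneg (fun _ _ => zero_le_one) ω)
      hf2 hg2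
    refine le_trans hH ?_
    have e1 : (∫ ω, ((X ω : ℝ) ^ k) ^ (2 : ℝ) ∂P) = ∫ ω, (X ω : ℝ) ^ (2 * k) ∂P := by
      refine integral_congr_ae (Filter.Eventually.of_forall fun ω => ?_)
      show ((X ω : ℝ) ^ k) ^ (2 : ℝ) = (X ω : ℝ) ^ (2 * k)
      have h2 : ((X ω : ℝ) ^ k) ^ (2 : ℝ) = ((X ω : ℝ) ^ k) ^ (2 : ℕ) := by
        rw [← Real.rpow_natCast ((X ω : ℝ) ^ k) 2]; norm_num
      rw [h2, ← pow_mul, mul_comm k 2]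
    have e2 : (∫ ω, (S.indicator (fun _ => (1 : ℝ)) ω) ^ (2 : ℝ) ∂P) = (P S).toReal := by
      have : (∫ ω, (S.indicator (fun _ => (1 : ℝ)) ω) ^ (2 : ℝ) ∂P) =
          ∫ ω, S.indicator (fun _ => (1 : ℝ)) ω ∂P := by
        refine integral_congr_ae (Filter.Eventually.of_forall fun ω => ?_)
        by_cases hω : ω ∈ S <;>
          simp [Set.indicator_of_mem, Set.indicator_of_notMem, hω,
            Real.rpow_natCast, Real.zero_rpow (by norm_num : (2:ℝ) ≠ 0)]
      rw [this, integral_indicator_const _ hA]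
      simp [Measure.real]
    rw [e1, e2, Real.sqrt_eq_rpow, Real.sqrt_eq_rpow]
  -- bound on Sᶜ : multiply by the exponential factor
  set c : ℝ := Real.exp ((k : ℝ) * ((k : ℝ) - 1) / (2 * R)) with hcdef
  have hcpos : 0 < c := Real.exp_pos _
  have hcbd : (∫ ω in Sᶜ, ((X ω).descFactorial k : ℝ) ∂P) * c ≤ ∫ ω, (X ω : ℝ) ^ k ∂P := by
    have h1 : (∫ ω in Sᶜ, ((X ω).descFactorial k : ℝ) ∂P) * c =
        ∫ ω in Sᶜ, ((X ω).descFactorial k : ℝ) * c ∂P := (integral_mul_const c _).symm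
    rw [h1]
    have h2 : (∫ ω in Sᶜ, ((X ω).descFactorial k : ℝ) * c ∂P) ≤
        ∫ ω in Sᶜ, (X ω : ℝ) ^ k ∂P := by
      refine setIntegral_mono_on (hDF.mul_const c).integrableOn hIk.integrableOn
        hA.compl fun ω hω => ?_
      have hle : (X ω : ℝ) ≤ R := le_of_not_gt (by simpa [hS] using hω)
      exact descFactorial_mul_exp_le k hk R hR (X ω) hle
    refine le_trans h2 (setIntegral_le_integral hIk
      (Filter.Eventually.of_forall fun ω => by positivity))
  -- combine
  have hmain : (∫ ω, ((X ω).descFactorial k : ℝ) ∂P) -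
      Real.sqrt (∫ ω, ((X ω : ℝ)) ^ (2 * k) ∂P) * Real.sqrt ((P S).toReal) ≤
      ∫ ω in Sᶜ, ((X ω).descFactorial k : ℝ) ∂P := by
    rw [hsplit]
    linarith [hCS]
  calc ((∫ ω, ((X ω).descFactorial k : ℝ) ∂P) -
        Real.sqrt (∫ ω, ((X ω : ℝ)) ^ (2 * k) ∂P) * Real.sqrt ((P S).toReal)) * c
      ≤ (∫ ω in Sᶜ, ((X ω).descFactorial k : ℝ) ∂P) * c :=
        mul_le_mul_of_nonneg_right hmain hcpos.le
    _ ≤ ∫ ω, (X ω : ℝ) ^ k ∂P := hcbd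
end

section
/- There exist positive constants C, k0, and N0 such that for all integers N ≥ N0, all integers k with k0 ≤ k ≤ N, and all q ∈ [k^{-2}, 1), the sum S = Σ_{i=1}^{k−1} ( (i/k)·(1−i/k) )^{-1} · exp[ k·( (i/k)·log(1/q) + 2·H(i/k) + (k/N)·(1−i/k) ) ] satisfies S ≤ C·q^{-1/4}·k^{1/2}·[ (1 + q^{1/2}·exp(k/(2N)))² / q ]^k. -/
/-- The entropy function `H(x) = -x log x - (1-x) log (1-x)`. -/
noncomputable def entropyH (x : ℝ) : ℝ := -x * Real.log x - (1 - x) * Real.log (1 - x)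

/-- The sum `S` appearing in the factorial moment formula. -/
noncomputable def ledouxSum (q : ℝ) (N k : ℕ) : ℝ :=
  ∑ i ∈ Finset.Ico 1 k,
    (((i : ℝ) / k) * (1 - (i : ℝ) / k))⁻¹ *
      Real.exp ((k : ℝ) * (((i : ℝ) / k) * Real.log q⁻¹ + 2 * entropyH ((i : ℝ) / k) +
        ((k : ℝ) / N) * (1 - (i : ℝ) / k)))

open Real
set_option maxHeartbeats 1000000


lemma sseq_le (n : ℕ) (hn : 1 ≤ n) : Stirling.stirlingSeq n ≤ Real.exp 1 / Real.sqrt 2 := by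
  obtain ⟨m, rfl⟩ := Nat.exists_eq_add_of_le hn
  have := Stirling.stirlingSeq'_antitone (Nat.zero_le m)
  simpa [Function.comp, Nat.succ_eq_add_one, Nat.add_comm] using this

lemma le_sseq (n : ℕ) (hn : 1 ≤ n) : Real.sqrt π ≤ Stirling.stirlingSeq n := by
  obtain ⟨m, rfl⟩ := Nat.exists_eq_add_of_le hn
  have ht : Filter.Tendsto (Stirling.stirlingSeq ∘ Nat.succ) Filter.atTop (nhds (Real.sqrt π)) :=
    Stirling.tendsto_stirlingSeq_sqrt_pi.comp (Filter.tendsto_add_atTop_nat 1)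
  have := Stirling.stirlingSeq'_antitone.le_of_tendsto ht m
  simpa [Function.comp, Nat.add_comm] using this

lemma fact_eq (n : ℕ) (hn : 1 ≤ n) : (n.factorial : ℝ) = Stirling.stirlingSeq n * (Real.sqrt (2*n) * ((n:ℝ)/Real.exp 1)^n) := by
  rw [Stirling.stirlingSeq, div_mul_cancel₀]
  have : (0:ℝ) < n := by exact_mod_cast hn
  positivity

lemma exp_sq_le : Real.exp 1 ^ 2 ≤ 3 * (Real.sqrt 2 * Real.sqrt π) := by
  have h1 : Real.exp 1 ≤ 2.7182818286 := Real.exp_one_lt_d9.le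
  have h2 : Real.sqrt 2 * Real.sqrt π = Real.sqrt (2 * π) := (Real.sqrt_mul (by norm_num) π).symm
  have h3 : (2.5066 : ℝ) ≤ Real.sqrt (2 * π) := by
    rw [show (2.5066:ℝ) = Real.sqrt (2.5066^2) by rw [Real.sqrt_sq]; norm_num]
    apply Real.sqrt_le_sqrt
    nlinarith [Real.pi_gt_d6]
  have h0 : (0:ℝ) ≤ Real.exp 1 := (Real.exp_pos 1).le
  nlinarith

lemma pow_le_choose_entropy (m d : ℕ) (hm : 1 ≤ m) (hd : 1 ≤ d) :
    ((m:ℝ) + d) ^ (m + d) ≤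
      3 * (Real.sqrt ((m:ℝ) * d) / Real.sqrt ((m:ℝ) + d)) * ((m + d).choose m) *
        ((m : ℝ) ^ m * (d : ℝ) ^ d) := by
  have hmp : (0:ℝ) < m := by exact_mod_cast hm
  have hdp : (0:ℝ) < d := by exact_mod_cast hd
  have hnp : (0:ℝ) < (m:ℝ) + d := by linarith
  have hn1 : 1 ≤ m + d := le_trans hm (Nat.le_add_right m d)
  have hE : (0:ℝ) < Real.exp 1 := Real.exp_pos 1
  have hchoose : (((m+d).choose m : ℝ)) * ((m.factorial : ℝ) * (d.factorial : ℝ))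
      = ((m+d).factorial : ℝ) := by
    have h := Nat.add_choose_mul_factorial_mul_factorial m d
    have h2 : (m+d).choose m = (m+d).choose d := by
      rw [← Nat.choose_symm (Nat.le_add_right m d)]; congr 1; omega
    rw [h2, ← mul_assoc]
    exact_mod_cast congrArg (Nat.cast : ℕ → ℝ) h
  set C := (((m+d).choose m : ℝ)) with hC
  have hCpos : (0:ℝ) < C := by
    rw [hC]
    exact_mod_cast Nat.choose_pos (Nat.le_add_right m d)
  -- substitute stirling
  rw [fact_eq m hm, fact_eq d hd, fact_eq (m+d) hn1] at hchoose
  set A := Stirling.stirlingSeq (m+d)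
  set B := Stirling.stirlingSeq m
  set D := Stirling.stirlingSeq d
  have hApos : 0 < A := by
    have := le_sseq (m+d) hn1
    have : (0:ℝ) < Real.sqrt π := Real.sqrt_pos.mpr Real.pi_pos
    linarith [le_sseq (m+d) hn1]
  have hA : Real.sqrt π ≤ A := le_sseq (m+d) hn1
  have hB : B ≤ Real.exp 1 / Real.sqrt 2 := sseq_le m hm
  have hD : D ≤ Real.exp 1 / Real.sqrt 2 := sseq_le d hd
  have hBpos : 0 < B := Stirling.stirlingSeq'_pos (m-1) |>.trans_eq (by congr 1; omega)
  have hDpos : 0 < D := Stirling.stirlingSeq'_pos (d-1) |>.trans_eq (by congr 1; omega)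
  -- sqrt abbreviations
  have hcast : ((m+d : ℕ) : ℝ) = (m:ℝ) + d := by push_cast; ring
  rw [hcast] at hchoose
  set sn := Real.sqrt (2*((m:ℝ)+d)) with hsn
  set sm := Real.sqrt (2*(m:ℝ)) with hsm
  set sd := Real.sqrt (2*(d:ℝ)) with hsd
  have hsnp : 0 < sn := Real.sqrt_pos.mpr (by linarith)
  have hsmp : 0 < sm := Real.sqrt_pos.mpr (by linarith)
  have hsdp : 0 < sd := Real.sqrt_pos.mpr (by linarith)
  -- from hchoose : C * (B * (sm * (m/E)^m) * (D * (sd * (d/E)^d))) = A * (sn * (n/E)^n)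
  -- clear the E powers
  have hEpow : ((m:ℝ)/Real.exp 1)^m * ((d:ℝ)/Real.exp 1)^d * Real.exp 1 ^ (m+d)
      = (m:ℝ)^m * (d:ℝ)^d := by
    rw [div_pow, div_pow, pow_add]
    field_simp
  have hEpow2 : (((m:ℝ)+d)/Real.exp 1)^(m+d) * Real.exp 1 ^ (m+d) = ((m:ℝ)+d)^(m+d) := by
    rw [div_pow]
    field_simp
  have key : A * (sn * (((m:ℝ)+d)^(m+d))) = C * (B * (sm * (m:ℝ)^m) * (D * (sd * (d:ℝ)^d))) := by
    have := congrArg (· * Real.exp 1 ^ (m+d)) hchoose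
    rw [← hEpow2]
    calc A * (sn * ((((m:ℝ)+d)/Real.exp 1)^(m+d) * Real.exp 1 ^ (m+d)))
        = (A * (sn * (((m:ℝ)+d)/Real.exp 1)^(m+d))) * Real.exp 1 ^ (m+d) := by ring
      _ = (C * (B * (sm * ((m:ℝ)/Real.exp 1)^m) * (D * (sd * ((d:ℝ)/Real.exp 1)^d)))) * Real.exp 1 ^ (m+d) := by rw [this]
      _ = C * B * D * sm * sd * (((m:ℝ)/Real.exp 1)^m * ((d:ℝ)/Real.exp 1)^d * Real.exp 1 ^ (m+d)) := by ring
      _ = C * B * D * sm * sd * ((m:ℝ)^m * (d:ℝ)^d) := by rw [hEpow]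
      _ = C * (B * (sm * (m:ℝ)^m) * (D * (sd * (d:ℝ)^d))) := by ring
  -- sqrt simplifications
  have hsq4 : Real.sqrt 4 = 2 := by
    rw [show (4:ℝ) = 2^2 by norm_num, Real.sqrt_sq (by norm_num : (0:ℝ) ≤ 2)]
  have hsmsd : sm * sd = 2 * Real.sqrt ((m:ℝ)*d) := by
    rw [hsm, hsd, ← Real.sqrt_mul (by positivity),
      show (2*(m:ℝ))*(2*(d:ℝ)) = 4*((m:ℝ)*(d:ℝ)) by ring,
      Real.sqrt_mul (by norm_num : (0:ℝ) ≤ 4), hsq4]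
  have hsn_eq : sn = Real.sqrt 2 * Real.sqrt ((m:ℝ)+d) := by
    rw [hsn, Real.sqrt_mul (by norm_num)]
  set sq := Real.sqrt ((m:ℝ)*d) with hsqdef
  set sr := Real.sqrt ((m:ℝ)+d) with hsrdef
  set s2 := Real.sqrt 2 with hs2def
  set spi := Real.sqrt π with hspidef
  have hsqp : 0 < sq := Real.sqrt_pos.mpr (by positivity)
  have hsrp : 0 < sr := Real.sqrt_pos.mpr hnp
  have hs2p : 0 < s2 := Real.sqrt_pos.mpr (by norm_num)
  have hspip : 0 < spi := Real.sqrt_pos.mpr Real.pi_pos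
  have hQp : (0:ℝ) < (m:ℝ)^m * (d:ℝ)^d := by positivity
  have hPp : (0:ℝ) < ((m:ℝ)+d)^(m+d) := by positivity
  have hBD : B * D ≤ Real.exp 1 ^ 2 / 2 := by
    have h := mul_le_mul hB hD hDpos.le (by positivity)
    calc B * D ≤ (Real.exp 1 / s2) * (Real.exp 1 / s2) := h
      _ = Real.exp 1 ^2 / (s2^2) := by ring
      _ = Real.exp 1 ^2 / 2 := by rw [hs2def, Real.sq_sqrt]; norm_num
  have step1 : spi * (s2 * sr) * (((m:ℝ)+d)^(m+d)) ≤
      C * (3 * (s2 * spi)) * (sq * ((m:ℝ)^m * (d:ℝ)^d)) := by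
    calc spi * (s2 * sr) * (((m:ℝ)+d)^(m+d))
        ≤ A * (s2 * sr) * (((m:ℝ)+d)^(m+d)) := by gcongr
      _ = A * (sn * (((m:ℝ)+d)^(m+d))) := by rw [hsn_eq]; ring
      _ = C * (B * (sm * (m:ℝ)^m) * (D * (sd * (d:ℝ)^d))) := key
      _ = C * (B * D) * ((sm * sd) * ((m:ℝ)^m * (d:ℝ)^d)) := by ring
      _ = C * (B * D) * ((2 * sq) * ((m:ℝ)^m * (d:ℝ)^d)) := by rw [hsmsd]
      _ ≤ C * (Real.exp 1 ^2 / 2) * ((2 * sq) * ((m:ℝ)^m * (d:ℝ)^d)) := by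
          apply mul_le_mul_of_nonneg_right _ (by positivity)
          exact mul_le_mul_of_nonneg_left hBD hCpos.le
      _ = C * (Real.exp 1 ^ 2) * (sq * ((m:ℝ)^m * (d:ℝ)^d)) := by ring
      _ ≤ C * (3 * (s2 * spi)) * (sq * ((m:ℝ)^m * (d:ℝ)^d)) := by
          apply mul_le_mul_of_nonneg_right _ (by positivity)
          exact mul_le_mul_of_nonneg_left exp_sq_le hCpos.le
  have step2 : sr * (((m:ℝ)+d)^(m+d)) ≤ 3 * sq * (C * ((m:ℝ)^m * (d:ℝ)^d)) := by
    have hpos : 0 < s2 * spi := by positivity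
    have l : (s2 * spi) * (sr * (((m:ℝ)+d)^(m+d))) ≤
        (s2 * spi) * (3 * sq * (C * ((m:ℝ)^m * (d:ℝ)^d))) := by
      calc (s2 * spi) * (sr * (((m:ℝ)+d)^(m+d)))
          = spi * (s2 * sr) * (((m:ℝ)+d)^(m+d)) := by ring
        _ ≤ C * (3 * (s2 * spi)) * (sq * ((m:ℝ)^m * (d:ℝ)^d)) := step1
        _ = (s2 * spi) * (3 * sq * (C * ((m:ℝ)^m * (d:ℝ)^d))) := by ring
    exact le_of_mul_le_mul_left l hpos
  have hrw : 3 * (sq / sr) * C * ((m:ℝ)^m * (d:ℝ)^d)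
      = (3 * sq * (C * ((m:ℝ)^m * (d:ℝ)^d))) / sr := by
    field_simp
  rw [hrw, le_div_iff₀ hsrp]
  calc ((m:ℝ)+d)^(m+d) * sr = sr * (((m:ℝ)+d)^(m+d)) := by ring
    _ ≤ 3 * sq * (C * ((m:ℝ)^m * (d:ℝ)^d)) := step2

lemma exp_two_entropy_le (i d : ℕ) (hi : 1 ≤ i) (hd : 1 ≤ d) :
    Real.exp (2 * ((i:ℝ) + d) * entropyH ((i:ℝ) / ((i:ℝ) + d))) ≤
      5 * (Real.sqrt ((i:ℝ) * d) / Real.sqrt ((i:ℝ) + d)) * ((2*(i+d)).choose (2*i)) := by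
  have hip : (0:ℝ) < i := by exact_mod_cast hi
  have hdp : (0:ℝ) < d := by exact_mod_cast hd
  have hnp : (0:ℝ) < (i:ℝ) + d := by linarith
  have hx1 : 1 - (i:ℝ)/((i:ℝ)+d) = (d:ℝ)/((i:ℝ)+d) := by field_simp; ring
  have heq : Real.exp (2 * ((i:ℝ) + d) * entropyH ((i:ℝ) / ((i:ℝ) + d)))
      * (((2:ℝ)*i)^(2*i) * ((2:ℝ)*d)^(2*d)) = ((2:ℝ)*((i:ℝ)+d))^(2*(i+d)) := by
    rw [entropyH, hx1]
    have harg : 2 * ((i:ℝ) + d) * (-((i:ℝ)/((i:ℝ)+d)) * Real.log ((i:ℝ)/((i:ℝ)+d))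
        - (d:ℝ)/((i:ℝ)+d) * Real.log ((d:ℝ)/((i:ℝ)+d)))
        = (2*i : ℕ) * Real.log (((i:ℝ)+d)/i) + (2*d : ℕ) * Real.log (((i:ℝ)+d)/d) := by
      rw [Real.log_div (by positivity) (by positivity), Real.log_div (by positivity) (by positivity),
        Real.log_div (by positivity) (by positivity), Real.log_div (by positivity) (by positivity)]
      push_cast
      field_simp
      ring
    rw [harg, Real.exp_add, Real.exp_nat_mul, Real.exp_nat_mul,
      Real.exp_log (by positivity), Real.exp_log (by positivity)]
    rw [mul_pow ((2:ℝ)) ((i:ℝ)), mul_pow ((2:ℝ)) ((d:ℝ)), mul_pow ((2:ℝ)) (((i:ℝ)+d)),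
      div_pow, div_pow]
    rw [pow_mul' 2 2 (i+d), pow_mul' 2 2 i, pow_mul' 2 2 d]
    field_simp
    ring
  have hb := pow_le_choose_entropy (2*i) (2*d) (by omega) (by omega)
  have hcast1 : ((2*i : ℕ):ℝ) = 2*(i:ℝ) := by push_cast; ring
  have hcast2 : ((2*d : ℕ):ℝ) = 2*(d:ℝ) := by push_cast; ring
  rw [hcast1, hcast2] at hb
  rw [show 2*i + 2*d = 2*(i+d) from by omega] at hb
  have hb2 : ((2:ℝ)*((i:ℝ)+d))^(2*(i+d)) ≤
      3 * (Real.sqrt (2*(i:ℝ) * (2*(d:ℝ))) / Real.sqrt (2*(i:ℝ) + 2*(d:ℝ)))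
        * ((2*(i+d)).choose (2*i)) * ((2*(i:ℝ))^(2*i) * (2*(d:ℝ))^(2*d)) := by
    rw [show (2:ℝ)*((i:ℝ)+d) = 2*(i:ℝ) + 2*(d:ℝ) by ring]
    exact hb
  have hsq4 : Real.sqrt 4 = 2 := by
    rw [show (4:ℝ) = 2^2 by norm_num, Real.sqrt_sq (by norm_num : (0:ℝ) ≤ 2)]
  have hr1 : Real.sqrt (2*(i:ℝ) * (2*(d:ℝ))) = 2 * Real.sqrt ((i:ℝ)*d) := by
    rw [show 2*(i:ℝ) * (2*(d:ℝ)) = 4*((i:ℝ)*(d:ℝ)) by ring,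
      Real.sqrt_mul (by norm_num : (0:ℝ) ≤ 4), hsq4]
  have hr2 : Real.sqrt (2*(i:ℝ) + 2*(d:ℝ)) = Real.sqrt 2 * Real.sqrt ((i:ℝ)+d) := by
    rw [show 2*(i:ℝ) + 2*(d:ℝ) = 2*((i:ℝ)+d) by ring, Real.sqrt_mul (by norm_num)]
  rw [hr1, hr2] at hb2
  have hs2 : (0:ℝ) < Real.sqrt 2 := Real.sqrt_pos.mpr (by norm_num)
  have hsr : (0:ℝ) < Real.sqrt ((i:ℝ)+d) := Real.sqrt_pos.mpr hnp
  have hsq : (0:ℝ) ≤ Real.sqrt ((i:ℝ)*d) := Real.sqrt_nonneg _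
  have hratio : 3 * (2 * Real.sqrt ((i:ℝ)*d) / (Real.sqrt 2 * Real.sqrt ((i:ℝ)+d)))
      ≤ 5 * (Real.sqrt ((i:ℝ)*d) / Real.sqrt ((i:ℝ)+d)) := by
    have e1 : 3 * (2 * Real.sqrt ((i:ℝ)*d) / (Real.sqrt 2 * Real.sqrt ((i:ℝ)+d)))
        = (6/Real.sqrt 2) * (Real.sqrt ((i:ℝ)*d) / Real.sqrt ((i:ℝ)+d)) := by
      field_simp; ring
    have e2 : 6/Real.sqrt 2 ≤ 5 := by
      rw [div_le_iff₀ hs2]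
      nlinarith [Real.sq_sqrt (by norm_num : (0:ℝ) ≤ 2), hs2]
    rw [e1]
    apply mul_le_mul_of_nonneg_right e2 (by positivity)
  have hCp : (0:ℝ) < ((2*(i+d)).choose (2*i) : ℝ) := by
    exact_mod_cast Nat.choose_pos (by omega)
  have hXp : (0:ℝ) < ((2:ℝ)*(i:ℝ))^(2*i) * ((2:ℝ)*(d:ℝ))^(2*d) := by positivity
  have final : Real.exp (2 * ((i:ℝ) + d) * entropyH ((i:ℝ) / ((i:ℝ) + d)))
      * (((2:ℝ)*i)^(2*i) * ((2:ℝ)*d)^(2*d))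
      ≤ (5 * (Real.sqrt ((i:ℝ)*d) / Real.sqrt ((i:ℝ)+d)) * ((2*(i+d)).choose (2*i)))
        * (((2:ℝ)*i)^(2*i) * ((2:ℝ)*d)^(2*d)) := by
    rw [heq]
    calc ((2:ℝ)*((i:ℝ)+d))^(2*(i+d))
        ≤ 3 * (2 * Real.sqrt ((i:ℝ)*d) / (Real.sqrt 2 * Real.sqrt ((i:ℝ)+d)))
          * ((2*(i+d)).choose (2*i)) * ((2*(i:ℝ))^(2*i) * (2*(d:ℝ))^(2*d)) := hb2
      _ ≤ (5 * (Real.sqrt ((i:ℝ)*d) / Real.sqrt ((i:ℝ)+d)))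
          * ((2*(i+d)).choose (2*i)) * ((2*(i:ℝ))^(2*i) * (2*(d:ℝ))^(2*d)) := by
          apply mul_le_mul_of_nonneg_right _ (by positivity)
          exact mul_le_mul_of_nonneg_right hratio hCp.le
      _ = (5 * (Real.sqrt ((i:ℝ)*d) / Real.sqrt ((i:ℝ)+d)) * ((2*(i+d)).choose (2*i)))
          * (((2:ℝ)*i)^(2*i) * ((2:ℝ)*d)^(2*d)) := by ring
  exact le_of_mul_le_mul_right final hXp

lemma key1_scalar (K D I a β s : ℝ) (hKp : 0 < K) (hDp : 0 < D) (hD1 : 1 ≤ D)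
    (ha0 : 0 < a) (hβ0 : 0 < β) (hKID : K = I + D) (hk2i : K ≤ 2*I) (haβ : β^2 ≤ a)
    (hs0 : 0 < s) (hs2 : s^2 = I*D) :
    β*(K/s) ≤ 7*(1 + (2*K-2*D)*a/(2*D+1)) := by
  have hIp : 0 < I := by nlinarith [hs2, mul_pos hs0 hs0]
  have hw2 : (K/s)^2 ≤ 2*K/D := by
    rw [div_pow, hs2, div_le_div_iff₀ (by positivity) hDp]
    nlinarith [mul_nonneg (sub_nonneg.mpr hk2i) (mul_pos hKp hDp).le]
  have hρlb : β^2*K/(3*D) ≤ (2*K-2*D)*a/(2*D+1) := by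
    rw [div_le_div_iff₀ (by positivity) (by positivity)]
    have h2KD : K ≤ 2*K-2*D := by rw [hKID]; linarith
    have e1 : β^2*K*(2*D+1) ≤ β^2*K*(3*D) := by
      apply mul_le_mul_of_nonneg_left (by linarith) (mul_nonneg (sq_nonneg β) hKp.le)
    have e2 : β^2*K*(3*D) ≤ a*K*(3*D) :=
      mul_le_mul_of_nonneg_right (mul_le_mul_of_nonneg_right haβ hKp.le) (by positivity)
    have e3 : a*K*(3*D) ≤ a*(2*K-2*D)*(3*D) := by
      apply mul_le_mul_of_nonneg_right _ (by positivity)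
      exact mul_le_mul_of_nonneg_left h2KD ha0.le
    nlinarith [e1, e2, e3]
  have hamgm : β*(K/s) ≤ 1 + β^2*(K/s)^2/4 := by
    nlinarith [sq_nonneg (1 - β*(K/s)/2)]
  have hm : β^2*(K/s)^2 ≤ β^2*(2*K/D) := mul_le_mul_of_nonneg_left hw2 (sq_nonneg β)
  have hrr : β^2*(2*K/D) = 6*(β^2*K/(3*D)) := by field_simp; ring
  have hρ0 : 0 ≤ (2*K-2*D)*a/(2*D+1) := by
    have : 0 ≤ 2*K-2*D := by rw [hKID]; nlinarith
    positivity
  linarith [hamgm, hm, hρlb, hρ0]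

lemma key2_scalar (K D I a s : ℝ) (hKp : 0 < K) (hDp : 0 < D) (hIp : 0 < I) (hI1 : 1 ≤ I)
    (ha0 : 0 < a) (ha53 : a ≤ 5/3) (hKID : K = I + D) (hID : I ≤ D)
    (hs0 : 0 < s) (hs2 : s^2 = I*D) :
    K/s ≤ 7*(2*D/((2*I+1)*a)) := by
  have hsI : I ≤ s := by
    nlinarith [hs2, hs0.le, mul_nonneg hIp.le (sub_nonneg.mpr hID)]
  have hwKI : K/s ≤ K/I := by gcongr
  have hKIρ : K/I ≤ 7*(2*D/((2*I+1)*a)) := by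
    rw [show 7*(2*D/((2*I+1)*a)) = 14*D/((2*I+1)*a) by ring,
      div_le_div_iff₀ hIp (by positivity)]
    have hK2D : K ≤ 2*D := by rw [hKID]; linarith
    have h2I3I : 2*I+1 ≤ 3*I := by linarith
    have e1 : (2*I+1)*a ≤ 3*I*(5/3) := mul_le_mul h2I3I ha53 ha0.le (by positivity)
    have e2 : K*((2*I+1)*a) ≤ K*(3*I*(5/3)) := mul_le_mul_of_nonneg_left e1 hKp.le
    have e4 : 5*K*I ≤ 10*D*I := by nlinarith [mul_le_mul_of_nonneg_right hK2D hIp.le]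
    nlinarith [mul_pos hDp hIp]
  exact hwKI.trans hKIρ

lemma per_term (N k i d : ℕ) (q : ℝ) (hi : 1 ≤ i) (hd : 1 ≤ d) (hid : i + d = k)
    (hkN : k ≤ N) (hN : 1 ≤ N) (hq0 : 0 < q) (hq1 : q < 1) :
    (((i : ℝ) / k) * (1 - (i : ℝ) / k))⁻¹ *
      Real.exp ((k : ℝ) * (((i : ℝ) / k) * Real.log q⁻¹ + 2 * entropyH ((i : ℝ) / k) +
        ((k : ℝ) / N) * (1 - (i : ℝ) / k)))
    ≤ 35 * (q ^ ((1:ℝ)/4))⁻¹ * Real.sqrt k * (q⁻¹)^k *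
      (((2*k).choose (2*d) : ℝ) * (Real.sqrt q * Real.exp ((k:ℝ)/(2*(N:ℝ))))^(2*d)
       + ((2*k).choose (if k ≤ 2*i then 2*d+1 else 2*d-1) : ℝ) *
           (Real.sqrt q * Real.exp ((k:ℝ)/(2*(N:ℝ))))^(if k ≤ 2*i then 2*d+1 else 2*d-1)) := by
  have hkn : k = i + d := hid.symm
  have hIp : (0:ℝ) < i := by exact_mod_cast hi
  have hDp : (0:ℝ) < d := by exact_mod_cast hd
  have hKID : (k:ℝ) = (i:ℝ) + d := by rw [hkn]; push_cast; ring
  have hKp : (0:ℝ) < k := by rw [hKID]; linarith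
  have hNp : (0:ℝ) < N := by exact_mod_cast hN
  set c : ℝ := (k:ℝ)/(2*(N:ℝ)) with hc
  have hc0 : 0 ≤ c := by positivity
  have hc2 : c ≤ 1/2 := by
    rw [hc, div_le_iff₀ (by positivity)]
    have : (k:ℝ) ≤ N := by exact_mod_cast hkN
    linarith
  set a : ℝ := Real.sqrt q * Real.exp c with ha
  have hsq0 : 0 < Real.sqrt q := Real.sqrt_pos.mpr hq0
  have ha0 : 0 < a := by positivity
  have hsq1 : Real.sqrt q ≤ 1 := by
    rw [show (1:ℝ) = Real.sqrt 1 by simp]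
    exact Real.sqrt_le_sqrt hq1.le
  have ha53 : a ≤ 5/3 := by
    have h1 : Real.exp c ≤ Real.exp (1/2 : ℝ) := Real.exp_le_exp.mpr hc2
    have h2 : Real.exp (1/2 : ℝ) ≤ 5/3 := by
      have hsq : Real.exp (1/2 : ℝ)^(2:ℕ) = Real.exp 1 := by
        rw [← Real.exp_nat_mul]; norm_num
      nlinarith [Real.exp_pos (1/2 : ℝ), Real.exp_one_lt_d9, sq_nonneg (Real.exp (1/2:ℝ) - 5/3)]
    calc a = Real.sqrt q * Real.exp c := ha
      _ ≤ 1 * (5/3) := by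
          apply mul_le_mul hsq1 (h1.trans h2) (Real.exp_pos c).le (by norm_num)
      _ = 5/3 := by norm_num
  set β : ℝ := q ^ ((1:ℝ)/4) with hβ
  have hβ0 : 0 < β := Real.rpow_pos_of_pos hq0 _
  have hβ1 : β ≤ 1 := Real.rpow_le_one hq0.le hq1.le (by norm_num)
  have hβsq : β^2 = Real.sqrt q := by
    rw [hβ, ← Real.rpow_natCast (q ^ ((1:ℝ)/4)) 2, ← Real.rpow_mul hq0.le,
      Real.sqrt_eq_rpow]
    norm_num
  have haβ : β^2 ≤ a := by
    rw [hβsq, ha]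
    calc Real.sqrt q = Real.sqrt q * 1 := by ring
      _ ≤ Real.sqrt q * Real.exp c :=
          mul_le_mul_of_nonneg_left (Real.one_le_exp hc0) hsq0.le
  -- rewrite the term
  have hx1 : 1 - (i:ℝ)/k = (d:ℝ)/k := by
    rw [hKID]; field_simp; ring
  have harg : (k:ℝ) * (((i:ℝ)/k) * Real.log q⁻¹ + 2 * entropyH ((i:ℝ)/k) +
      ((k:ℝ)/N) * (1 - (i:ℝ)/k))
      = (i:ℝ) * Real.log q⁻¹ + 2*(k:ℝ)*entropyH ((i:ℝ)/k) + ((2*d:ℕ):ℝ) * c := by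
    rw [hx1, hc]
    push_cast
    field_simp
  have hsplit : Real.exp ((k:ℝ) * (((i:ℝ)/k) * Real.log q⁻¹ + 2 * entropyH ((i:ℝ)/k) +
      ((k:ℝ)/N) * (1 - (i:ℝ)/k)))
      = (q⁻¹)^i * Real.exp (2*(k:ℝ)*entropyH ((i:ℝ)/k)) * (Real.exp c)^(2*d) := by
    rw [harg, Real.exp_add, Real.exp_add, Real.exp_nat_mul, Real.exp_nat_mul,
      Real.exp_log (inv_pos.mpr hq0)]
  set CH : ℝ := ((2*k).choose (2*i) : ℝ) with hCH
  have hCHp : 0 < CH := by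
    rw [hCH]; exact_mod_cast Nat.choose_pos (by omega)
  set s := Real.sqrt ((i:ℝ)*(d:ℝ)) with hs
  set r := Real.sqrt (k:ℝ) with hr
  have hs0 : 0 < s := Real.sqrt_pos.mpr (by positivity)
  have hr0 : 0 < r := Real.sqrt_pos.mpr hKp
  have hs2 : s^2 = (i:ℝ)*d := Real.sq_sqrt (by positivity)
  have hr2 : r^2 = (k:ℝ) := Real.sq_sqrt hKp.le
  have hent : Real.exp (2*(k:ℝ)*entropyH ((i:ℝ)/k)) ≤ 5 * (s/r) * CH := by
    have h := exp_two_entropy_le i d hi hd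
    rw [← hKID] at h
    have h2 : (2*(i+d)).choose (2*i) = (2*k).choose (2*i) := by rw [hkn]
    rw [h2] at h
    exact h
  have hpref : ((i:ℝ)/k * (1 - (i:ℝ)/k))⁻¹ = (k:ℝ)^2/((i:ℝ)*d) := by
    rw [hx1, show (i:ℝ)/k * ((d:ℝ)/k) = (i:ℝ)*d/(k:ℝ)^2 by ring, inv_div]
  have hrs_eq : (k:ℝ)^2/((i:ℝ)*d) * (5*(s/r)) = 5*r*((k:ℝ)/s) := by
    rw [← hs2, ← hr2]; field_simp
  set T2 : ℝ := ((2*k).choose (2*d) : ℝ) * a^(2*d) with hT2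
  have hT2p : 0 < T2 := by
    rw [hT2]
    have : (0:ℕ) < (2*k).choose (2*d) := Nat.choose_pos (by omega)
    have h' : (0:ℝ) < ((2*k).choose (2*d) : ℝ) := by exact_mod_cast this
    positivity
  have hq_id : (q⁻¹)^i * CH * (Real.exp c)^(2*d) = (q⁻¹)^k * T2 := by
    rw [hT2, hCH]
    have hch : (2*k).choose (2*d) = (2*k).choose (2*i) := by
      rw [← Nat.choose_symm (show 2*i ≤ 2*k by omega)]
      congr 1; omega
    rw [hch]
    have hapow : a^(2*d) = q^d * (Real.exp c)^(2*d) := by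
      rw [ha, mul_pow, pow_mul, Real.sq_sqrt hq0.le]
    rw [hapow]
    have hqq : (q⁻¹)^k * q^d = (q⁻¹)^i := by
      rw [hkn, pow_add]
      have : (q⁻¹)^d * q^d = 1 := by
        rw [← mul_pow, inv_mul_cancel₀ hq0.ne', one_pow]
      calc (q⁻¹)^i * (q⁻¹)^d * q^d = (q⁻¹)^i * ((q⁻¹)^d * q^d) := by ring
        _ = (q⁻¹)^i * 1 := by rw [this]
        _ = (q⁻¹)^i := by ring
    rw [← hqq]; ring
  set Todd : ℝ := ((2*k).choose (if k ≤ 2*i then 2*d+1 else 2*d-1) : ℝ) *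
      a^(if k ≤ 2*i then 2*d+1 else 2*d-1) with hTodd
  have hToddp : 0 ≤ Todd := by
    rw [hTodd]; positivity
  -- the key combinatorial inequality
  have hkey : ((k:ℝ)/s) * T2 ≤ 7*β⁻¹*(T2 + Todd) := by
    by_cases hcase : k ≤ 2*i
    · -- use upper odd neighbor
      simp only [hTodd, if_pos hcase]
      have h2d : 2*d ≤ 2*k := by omega
      have hcs := Nat.choose_succ_right_eq (2*k) (2*d)
      have hcsR : ((2*k).choose (2*d+1):ℝ) * (2*(d:ℝ)+1)
          = ((2*k).choose (2*d):ℝ) * (2*(k:ℝ)-2*(d:ℝ)) := by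
        have := congrArg (Nat.cast : ℕ → ℝ) hcs
        push_cast [Nat.cast_sub h2d] at this
        linear_combination this
      set ρ : ℝ := (2*(k:ℝ)-2*(d:ℝ))*a/(2*(d:ℝ)+1) with hρ
      have hρ0 : 0 ≤ ρ := by
        rw [hρ]
        have : (0:ℝ) ≤ 2*(k:ℝ)-2*(d:ℝ) := by
          have : (d:ℝ) ≤ k := by rw [hKID]; linarith
          linarith
        positivity
      have hToddeq : ((2*k).choose (2*d+1):ℝ) * a^(2*d+1) = T2 * ρ := by
        rw [hT2, hρ]
        have hne : (2*(d:ℝ)+1) ≠ 0 := by positivity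
        field_simp
        linear_combination a^(2*d+1) * hcsR
      have hD1 : (1:ℝ) ≤ (d:ℝ) := by exact_mod_cast hd
      have hk2i : (k:ℝ) ≤ 2*(i:ℝ) := by exact_mod_cast hcase
      have hscalar : β*((k:ℝ)/s) ≤ 7*(1 + ρ) := by
        rw [hρ]
        exact key1_scalar (k:ℝ) (d:ℝ) (i:ℝ) a β s hKp hDp hD1 ha0 hβ0 hKID hk2i haβ hs0 hs2
      have hfin : (k:ℝ)/s ≤ 7*β⁻¹*(1+ρ) := by
        rw [show 7*β⁻¹*(1+ρ) = β⁻¹*(7*(1+ρ)) by ring, le_inv_mul_iff₀ hβ0]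
        exact hscalar
      calc ((k:ℝ)/s) * T2 ≤ (7*β⁻¹*(1+ρ)) * T2 :=
            mul_le_mul_of_nonneg_right hfin hT2p.le
        _ = 7*β⁻¹*(T2 + T2*ρ) := by ring
        _ = 7*β⁻¹*(T2 + ((2*k).choose (2*d+1):ℝ) * a^(2*d+1)) := by rw [← hToddeq]
    · -- use lower odd neighbor
      simp only [hTodd, if_neg hcase]
      have hik : i < d := by omega
      have hcs := Nat.choose_succ_right_eq (2*k) (2*d-1)
      rw [show 2*d-1+1 = 2*d from by omega, show 2*k - (2*d-1) = 2*i+1 from by omega] at hcs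
      have hcsR : ((2*k).choose (2*d):ℝ) * (2*(d:ℝ))
          = ((2*k).choose (2*d-1):ℝ) * (2*(i:ℝ)+1) := by
        have := congrArg (Nat.cast : ℕ → ℝ) hcs
        push_cast at this
        linear_combination this
      have hpow : a^(2*d-1)*a = a^(2*d) := by
        rw [← pow_succ]; congr 1; omega
      have hToddeq : ((2*k).choose (2*d-1):ℝ) * a^(2*d-1) = T2 * (2*(d:ℝ)/((2*(i:ℝ)+1)*a)) := by
        rw [hT2, ← mul_div_assoc, eq_div_iff (by positivity)]
        calc ((2*k).choose (2*d-1):ℝ) * a^(2*d-1) * ((2*(i:ℝ)+1)*a)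
            = (((2*k).choose (2*d-1):ℝ) * (2*(i:ℝ)+1)) * (a^(2*d-1)*a) := by ring
          _ = (((2*k).choose (2*d):ℝ) * (2*(d:ℝ))) * (a^(2*d-1)*a) := by rw [hcsR]
          _ = (((2*k).choose (2*d):ℝ) * (2*(d:ℝ))) * a^(2*d) := by rw [hpow]
          _ = ((2*k).choose (2*d):ℝ) * a^(2*d) * (2*(d:ℝ)) := by ring
      have hID : (i:ℝ) ≤ (d:ℝ) := by exact_mod_cast hik.le
      have hI1 : (1:ℝ) ≤ (i:ℝ) := by exact_mod_cast hi
      have hsc2 : (k:ℝ)/s ≤ 7*(2*(d:ℝ)/((2*(i:ℝ)+1)*a)) :=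
        key2_scalar (k:ℝ) (d:ℝ) (i:ℝ) a s hKp hDp hIp hI1 ha0 ha53 hKID hID hs0 hs2
      have hβinv : (1:ℝ) ≤ β⁻¹ := by
        rw [le_inv_comm₀ (by norm_num) hβ0]
        simpa using hβ1
      calc ((k:ℝ)/s) * T2 ≤ (7*(2*(d:ℝ)/((2*(i:ℝ)+1)*a))) * T2 :=
            mul_le_mul_of_nonneg_right hsc2 hT2p.le
        _ = 7*(T2 * (2*(d:ℝ)/((2*(i:ℝ)+1)*a))) := by ring
        _ = 7*(((2*k).choose (2*d-1):ℝ) * a^(2*d-1)) := by rw [← hToddeq]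
        _ ≤ 7*β⁻¹*(T2 + ((2*k).choose (2*d-1):ℝ) * a^(2*d-1)) := by
            have h0 : (0:ℝ) ≤ ((2*k).choose (2*d-1):ℝ) * a^(2*d-1) := by positivity
            have h1 : ((2*k).choose (2*d-1):ℝ) * a^(2*d-1)
                ≤ T2 + ((2*k).choose (2*d-1):ℝ) * a^(2*d-1) := le_add_of_nonneg_left hT2p.le
            have h2 : ((2*k).choose (2*d-1):ℝ) * a^(2*d-1)
                ≤ β⁻¹*(T2 + ((2*k).choose (2*d-1):ℝ) * a^(2*d-1)) :=
              h1.trans (le_mul_of_one_le_left (by positivity) hβinv)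
            calc 7*(((2*k).choose (2*d-1):ℝ) * a^(2*d-1))
                ≤ 7*(β⁻¹*(T2 + ((2*k).choose (2*d-1):ℝ) * a^(2*d-1))) :=
                  mul_le_mul_of_nonneg_left h2 (by norm_num)
              _ = 7*β⁻¹*(T2 + ((2*k).choose (2*d-1):ℝ) * a^(2*d-1)) := by ring
  -- assemble
  have hprefpos : (0:ℝ) ≤ ((i:ℝ)/k * (1 - (i:ℝ)/k))⁻¹ := by
    rw [hpref]; positivity
  calc (((i : ℝ) / k) * (1 - (i : ℝ) / k))⁻¹ *
      Real.exp ((k : ℝ) * (((i : ℝ) / k) * Real.log q⁻¹ + 2 * entropyH ((i : ℝ) / k) +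
        ((k : ℝ) / N) * (1 - (i : ℝ) / k)))
      = (((i:ℝ)/k) * (1 - (i:ℝ)/k))⁻¹ *
        ((q⁻¹)^i * Real.exp (2*(k:ℝ)*entropyH ((i:ℝ)/k)) * (Real.exp c)^(2*d)) := by
        rw [hsplit]
    _ ≤ (((i:ℝ)/k) * (1 - (i:ℝ)/k))⁻¹ * ((q⁻¹)^i * (5*(s/r)*CH) * (Real.exp c)^(2*d)) := by
        apply mul_le_mul_of_nonneg_left _ hprefpos
        apply mul_le_mul_of_nonneg_right _ (by positivity)
        apply mul_le_mul_of_nonneg_left hent (by positivity)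
    _ = ((k:ℝ)^2/((i:ℝ)*d) * (5*(s/r))) * ((q⁻¹)^i * CH * (Real.exp c)^(2*d)) := by
        rw [hpref]; ring
    _ = (5*r*((k:ℝ)/s)) * ((q⁻¹)^i * CH * (Real.exp c)^(2*d)) := by rw [hrs_eq]
    _ = (5*r*((k:ℝ)/s)) * ((q⁻¹)^k * T2) := by rw [hq_id]
    _ = 5*r*(q⁻¹)^k * (((k:ℝ)/s) * T2) := by ring
    _ ≤ 5*r*(q⁻¹)^k * (7*β⁻¹*(T2 + Todd)) := by
        apply mul_le_mul_of_nonneg_left hkey (by positivity)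
    _ = 35 * β⁻¹ * r * (q⁻¹)^k * (T2 + Todd) := by ring

lemma sum_T_le (k : ℕ) (a : ℝ) (ha : 0 ≤ a) (S : Finset ℕ) (g : ℕ → ℕ)
    (hinj : ∀ x ∈ S, ∀ y ∈ S, g x = g y → x = y)
    (hmem : ∀ i ∈ S, g i ≤ 2*k) :
    ∑ i ∈ S, ((2*k).choose (g i) : ℝ) * a^(g i) ≤ (1+a)^(2*k) := by
  rw [← Finset.sum_image (f := fun j => ((2*k).choose j : ℝ) * a^j) hinj]
  have hsub : S.image g ⊆ Finset.range (2*k+1) := by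
    intro j hj
    rw [Finset.mem_image] at hj
    obtain ⟨i, hiS, rfl⟩ := hj
    rw [Finset.mem_range]
    exact Nat.lt_succ_of_le (hmem i hiS)
  calc ∑ j ∈ S.image g, ((2*k).choose j : ℝ)*a^j
      ≤ ∑ j ∈ Finset.range (2*k+1), ((2*k).choose j : ℝ)*a^j :=
        Finset.sum_le_sum_of_subset_of_nonneg hsub (fun j _ _ => by positivity)
    _ = (1+a)^(2*k) := by
        rw [add_comm (1:ℝ) a, add_pow]
        exact Finset.sum_congr rfl (fun j _ => by rw [one_pow, mul_one, mul_comm])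

theorem ledoux_sum_upper_bound :
    ∃ C : ℝ, 0 < C ∧ ∃ k0 N0 : ℕ, 0 < k0 ∧ 0 < N0 ∧
      ∀ N k : ℕ, N0 ≤ N → k0 ≤ k → k ≤ N →
        ∀ q : ℝ, q ∈ Set.Ico (((k : ℝ) ^ 2)⁻¹) 1 →
          ledouxSum q N k ≤
            C * q ^ (-(1:ℝ)/4) * (k : ℝ) ^ ((1:ℝ)/2) *
              ((1 + q ^ ((1:ℝ)/2) * Real.exp ((k : ℝ) / (2 * N))) ^ 2 / q) ^ k := by
  refine ⟨105, by norm_num, 1, 1, by norm_num, by norm_num, ?_⟩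
  intro N k hN hk hkN q hq
  obtain ⟨hq1, hq2⟩ := hq
  have hKp : (0:ℝ) < k := by exact_mod_cast hk
  have hq0 : 0 < q := lt_of_lt_of_le (by positivity) hq1
  set c : ℝ := (k:ℝ)/(2*(N:ℝ)) with hc
  set a : ℝ := Real.sqrt q * Real.exp c with ha
  set β : ℝ := q ^ ((1:ℝ)/4) with hβ
  have hβ0 : 0 < β := Real.rpow_pos_of_pos hq0 _
  have hsq0 : 0 < Real.sqrt q := Real.sqrt_pos.mpr hq0
  have ha0 : 0 < a := by rw [ha]; positivity
  have hstep : ledouxSum q N k ≤ ∑ i ∈ Finset.Ico 1 k,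
      35 * β⁻¹ * Real.sqrt k * (q⁻¹)^k *
      (((2*k).choose (2*(k-i)) : ℝ) * a^(2*(k-i))
       + ((2*k).choose (if k ≤ 2*i then 2*(k-i)+1 else 2*(k-i)-1) : ℝ) *
           a^(if k ≤ 2*i then 2*(k-i)+1 else 2*(k-i)-1)) := by
    rw [ledouxSum]
    apply Finset.sum_le_sum
    intro i hi
    rw [Finset.mem_Ico] at hi
    exact per_term N k i (k-i) q hi.1 (by omega) (by omega) hkN hN hq0 hq2
  have hT2sum : ∑ i ∈ Finset.Ico 1 k, ((2*k).choose (2*(k-i)) : ℝ) * a^(2*(k-i)) ≤ (1+a)^(2*k) := by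
    apply sum_T_le k a ha0.le _ (fun i => 2*(k-i))
    · intro x hx y hy hxy
      rw [Finset.mem_Ico] at hx hy
      omega
    · intro i hi
      rw [Finset.mem_Ico] at hi
      omega
  have hOsum : ∑ i ∈ Finset.Ico 1 k,
      ((2*k).choose (if k ≤ 2*i then 2*(k-i)+1 else 2*(k-i)-1) : ℝ) *
        a^(if k ≤ 2*i then 2*(k-i)+1 else 2*(k-i)-1) ≤ 2*(1+a)^(2*k) := by
    rw [← Finset.sum_filter_add_sum_filter_not (Finset.Ico 1 k) (fun i => k ≤ 2*i)]
    have h1 : ∑ i ∈ (Finset.Ico 1 k).filter (fun i => k ≤ 2*i),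
        ((2*k).choose (if k ≤ 2*i then 2*(k-i)+1 else 2*(k-i)-1) : ℝ) *
          a^(if k ≤ 2*i then 2*(k-i)+1 else 2*(k-i)-1)
        ≤ (1+a)^(2*k) := by
      have he : ∀ i ∈ (Finset.Ico 1 k).filter (fun i => k ≤ 2*i),
          ((2*k).choose (if k ≤ 2*i then 2*(k-i)+1 else 2*(k-i)-1) : ℝ) *
            a^(if k ≤ 2*i then 2*(k-i)+1 else 2*(k-i)-1)
          = ((2*k).choose (2*(k-i)+1) : ℝ) * a^(2*(k-i)+1) := by
        intro i hi
        rw [Finset.mem_filter] at hi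
        rw [if_pos hi.2]
      rw [Finset.sum_congr rfl he]
      apply sum_T_le k a ha0.le _ (fun i => 2*(k-i)+1)
      · intro x hx y hy hxy
        rw [Finset.mem_filter, Finset.mem_Ico] at hx hy
        omega
      · intro i hi
        rw [Finset.mem_filter, Finset.mem_Ico] at hi
        omega
    have h2 : ∑ i ∈ (Finset.Ico 1 k).filter (fun i => ¬ k ≤ 2*i),
        ((2*k).choose (if k ≤ 2*i then 2*(k-i)+1 else 2*(k-i)-1) : ℝ) *
          a^(if k ≤ 2*i then 2*(k-i)+1 else 2*(k-i)-1)
        ≤ (1+a)^(2*k) := by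
      have he : ∀ i ∈ (Finset.Ico 1 k).filter (fun i => ¬ k ≤ 2*i),
          ((2*k).choose (if k ≤ 2*i then 2*(k-i)+1 else 2*(k-i)-1) : ℝ) *
            a^(if k ≤ 2*i then 2*(k-i)+1 else 2*(k-i)-1)
          = ((2*k).choose (2*(k-i)-1) : ℝ) * a^(2*(k-i)-1) := by
        intro i hi
        rw [Finset.mem_filter] at hi
        rw [if_neg hi.2]
      rw [Finset.sum_congr rfl he]
      apply sum_T_le k a ha0.le _ (fun i => 2*(k-i)-1)
      · intro x hx y hy hxy
        rw [Finset.mem_filter, Finset.mem_Ico] at hx hy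
        omega
      · intro i hi
        rw [Finset.mem_filter, Finset.mem_Ico] at hi
        omega
    linarith
  have hccst : (0:ℝ) ≤ 35 * β⁻¹ * Real.sqrt k * (q⁻¹)^k := by positivity
  have htot : ledouxSum q N k ≤ 105 * β⁻¹ * Real.sqrt k * ((q⁻¹)^k * (1+a)^(2*k)) := by
    calc ledouxSum q N k ≤ _ := hstep
      _ = 35 * β⁻¹ * Real.sqrt k * (q⁻¹)^k *
          ((∑ i ∈ Finset.Ico 1 k, ((2*k).choose (2*(k-i)) : ℝ) * a^(2*(k-i)))
          + ∑ i ∈ Finset.Ico 1 k,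
            ((2*k).choose (if k ≤ 2*i then 2*(k-i)+1 else 2*(k-i)-1) : ℝ) *
              a^(if k ≤ 2*i then 2*(k-i)+1 else 2*(k-i)-1)) := by
          rw [← Finset.mul_sum, Finset.sum_add_distrib]
      _ ≤ 35 * β⁻¹ * Real.sqrt k * (q⁻¹)^k * ((1+a)^(2*k) + 2*(1+a)^(2*k)) := by
          apply mul_le_mul_of_nonneg_left _ hccst
          linarith
      _ = 105 * β⁻¹ * Real.sqrt k * ((q⁻¹)^k * (1+a)^(2*k)) := by ring
  -- rewrite the target
  have hβinv : q ^ (-(1:ℝ)/4) = β⁻¹ := by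
    rw [show (-(1:ℝ)/4) = -((1:ℝ)/4) by norm_num, Real.rpow_neg hq0.le, hβ]
  have hhalf : q ^ ((1:ℝ)/2) = Real.sqrt q := by
    rw [Real.sqrt_eq_rpow]
  have hsqrtk : (k:ℝ) ^ ((1:ℝ)/2) = Real.sqrt k := by
    rw [Real.sqrt_eq_rpow]
  have hpow : ((1 + q ^ ((1:ℝ)/2) * Real.exp ((k : ℝ) / (2 * N))) ^ 2 / q) ^ k
      = (q⁻¹)^k * (1+a)^(2*k) := by
    rw [hhalf, ha, hc]
    rw [div_pow, pow_mul, div_eq_mul_inv, ← inv_pow]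
    ring
  rw [hβinv, hsqrtk, hpow]
  calc ledouxSum q N k ≤ 105 * β⁻¹ * Real.sqrt k * ((q⁻¹)^k * (1+a)^(2*k)) := htot
    _ = 105 * β⁻¹ * Real.sqrt ↑k * ((q⁻¹)^k * (1+a)^(2*k)) := by ring
end

section
/- There exist positive constants C and k0 such that for all integers N and k with k0 ≤ k ≤ N, and all q ∈ [k^{-2}, 1), the sum S = Σ_{i=1}^{k−1} ( (i/k)·(1−i/k) )^{-1} · exp[ k·( (i/k)·log(1/q) + 2·H(i/k) + (k/N)·(1−i/k) ) ] satisfies S ≥ C^{-1}·q^{-1/4}·k^{1/2}·[ (1 + q^{1/2}·exp(k/(2N)))² / q ]^k. -/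
lemma entropy_taylor {x y : ℝ} (hx0 : 0 < x) (hx1 : x < 1) (hy0 : 0 < y) (hy1 : y < 1) :
    entropyH y + (x - y) * (Real.log (1 - y) - Real.log y) ≤
      entropyH x + (x - y) ^ 2 / (y * (1 - y)) := by
  have h1x : (0:ℝ) < 1 - x := by linarith
  have h1y : (0:ℝ) < 1 - y := by linarith
  have l1 : Real.log x - Real.log y ≤ x / y - 1 := by
    have h := Real.log_le_sub_one_of_pos (div_pos hx0 hy0)
    rwa [Real.log_div hx0.ne' hy0.ne'] at h
  have l2 : Real.log (1 - x) - Real.log (1 - y) ≤ (1 - x) / (1 - y) - 1 := by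
    have h := Real.log_le_sub_one_of_pos (div_pos h1x h1y)
    rwa [Real.log_div h1x.ne' h1y.ne'] at h
  have l1' : x * (Real.log x - Real.log y) ≤ x * (x / y - 1) :=
    mul_le_mul_of_nonneg_left l1 hx0.le
  have l2' : (1 - x) * (Real.log (1 - x) - Real.log (1 - y)) ≤ (1 - x) * ((1 - x) / (1 - y) - 1) :=
    mul_le_mul_of_nonneg_left l2 h1x.le
  have key : x * (x / y - 1) + (1 - x) * ((1 - x) / (1 - y) - 1) = (x - y) ^ 2 / (y * (1 - y)) := by
    field_simp
    ring
  have hid : entropyH y + (x - y) * (Real.log (1 - y) - Real.log y)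
      = entropyH x + (x * (Real.log x - Real.log y) +
          (1 - x) * (Real.log (1 - x) - Real.log (1 - y))) := by
    unfold entropyH; ring
  rw [hid]
  linarith [l1', l2', key]

set_option maxHeartbeats 8000000 in
theorem ledoux_sum_lower_bound :
    ∃ C : ℝ, 0 < C ∧ ∃ k0 : ℕ, 0 < k0 ∧
      ∀ N k : ℕ, k0 ≤ k → k ≤ N →
        ∀ q : ℝ, q ∈ Set.Ico (((k : ℝ) ^ 2)⁻¹) 1 →
          C⁻¹ * q ^ (-(1:ℝ)/4) * (k : ℝ) ^ ((1:ℝ)/2) *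
              ((1 + q ^ ((1:ℝ)/2) * Real.exp ((k : ℝ) / (2 * N))) ^ 2 / q) ^ k ≤
            ledouxSum q N k := by
  refine ⟨Real.exp 20, Real.exp_pos _, 100, by norm_num, ?_⟩
  intro N k hk100 hkN q hq
  obtain ⟨hq_lb, hq1⟩ := hq
  have hkR : (100:ℝ) ≤ (k:ℝ) := by exact_mod_cast hk100
  have hkpos : (0:ℝ) < k := by linarith
  have hkNR : (k:ℝ) ≤ N := by exact_mod_cast hkN
  have hNpos : (0:ℝ) < N := by linarith
  have hq0 : 0 < q := lt_of_lt_of_le (by positivity) hq_lb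
  set s := q ^ ((1:ℝ)/2) * Real.exp ((k:ℝ) / (2 * (N:ℝ))) with hs_def
  have hs_pos : 0 < s := by positivity
  -- lower bound on s
  have hq_half_lb : (k:ℝ)⁻¹ ≤ q ^ ((1:ℝ)/2) := by
    have h1 : ((k:ℝ)^2)⁻¹ ^ ((1:ℝ)/2) ≤ q ^ ((1:ℝ)/2) :=
      Real.rpow_le_rpow (by positivity) hq_lb (by norm_num)
    have h2 : ((k:ℝ)^2)⁻¹ ^ ((1:ℝ)/2) = (k:ℝ)⁻¹ := by
      rw [← inv_pow, ← Real.rpow_natCast ((k:ℝ)⁻¹) 2, ← Real.rpow_mul (by positivity)]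
      norm_num
    linarith [h1, h2.symm.le, h2.le]
  have hs_lb : (k:ℝ)⁻¹ ≤ s := by
    have he1 : (1:ℝ) ≤ Real.exp ((k:ℝ) / (2 * (N:ℝ))) := Real.one_le_exp (by positivity)
    calc (k:ℝ)⁻¹ ≤ q ^ ((1:ℝ)/2) := hq_half_lb
      _ = q ^ ((1:ℝ)/2) * 1 := by ring
      _ ≤ s := by rw [hs_def]; gcongr
  -- upper bound on s
  have hexphalf : Real.exp ((k:ℝ) / (2 * (N:ℝ))) ≤ Real.exp (1/2) := by
    apply Real.exp_le_exp.2
    rw [div_le_div_iff₀ (by positivity) (by norm_num)]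
    linarith
  have hehalf_lt : Real.exp ((1:ℝ)/2) < 33/20 := by
    have hsq : Real.exp ((1:ℝ)/2) * Real.exp ((1:ℝ)/2) = Real.exp 1 := by
      rw [← Real.exp_add]; norm_num
    nlinarith [Real.exp_pos ((1:ℝ)/2), Real.exp_one_lt_d9]
  have hs_ub : s < 33/20 := by
    have hql : q ^ ((1:ℝ)/2) ≤ 1 := Real.rpow_le_one hq0.le hq1.le (by norm_num)
    calc s ≤ 1 * Real.exp ((k:ℝ) / (2 * (N:ℝ))) := by rw [hs_def]; gcongr
      _ ≤ Real.exp (1/2) := by rw [one_mul]; exact hexphalf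
      _ < 33/20 := hehalf_lt
  -- log relation
  have hlogs : 2 * Real.log s = Real.log q + (k:ℝ)/N := by
    rw [hs_def, Real.log_mul (by positivity) (Real.exp_pos _).ne', Real.log_exp,
      Real.log_rpow hq0]
    field_simp
  clear_value s
  -- the optimum point
  have h1s : (0:ℝ) < 1 + s := by linarith
  set xs : ℝ := (1 + s)⁻¹ with hxs_def
  have hxs_pos : 0 < xs := by positivity
  have hxs1 : xs < 1 := by
    rw [hxs_def]
    rw [inv_lt_one_iff₀]
    right; linarith
  have h1xs : 1 - xs = s / (1 + s) := by rw [hxs_def]; field_simp; ring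
  have hxs1xs : xs * (1 - xs) = s / (1 + s)^2 := by
    rw [h1xs, hxs_def]
    rw [pow_two]
    rw [div_mul_eq_div_div, inv_mul_eq_div]
  have hlogdiff : Real.log (1 - xs) - Real.log xs = Real.log s := by
    rw [h1xs, hxs_def, Real.log_div hs_pos.ne' h1s.ne', Real.log_inv]
    ring
  have hHxs : 2 * entropyH xs - 2 * xs * Real.log s = 2 * Real.log (1 + s) - 2 * Real.log s := by
    have hlxs : Real.log xs = -Real.log (1 + s) := by rw [hxs_def, Real.log_inv]
    have hl1xs : Real.log (1 - xs) = Real.log s - Real.log (1 + s) := by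
      rw [h1xs, Real.log_div hs_pos.ne' h1s.ne']
    have hsum1 : xs + s / (1 + s) = 1 := by rw [hxs_def]; field_simp
    unfold entropyH
    rw [hlxs, hl1xs, h1xs]
    linear_combination (2 * Real.log (1 + s) - 2 * Real.log s) * hsum1
  clear_value xs
  -- indices
  set i2 : ℕ := ⌊(k:ℝ) * xs⌋₊ with hi2_def
  set m' : ℕ := ⌊Real.sqrt ((k:ℝ) * s)⌋₊ with hm_def
  have hks1 : (1:ℝ) ≤ (k:ℝ) * s := by
    have := mul_le_mul_of_nonneg_left hs_lb hkpos.le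
    rwa [mul_inv_cancel₀ hkpos.ne'] at this
  have hsqrt_ge1 : (1:ℝ) ≤ Real.sqrt ((k:ℝ) * s) := by
    rw [show (1:ℝ) = Real.sqrt 1 by simp]
    exact Real.sqrt_le_sqrt hks1
  have hm1 : 1 ≤ m' := Nat.le_floor (by exact_mod_cast hsqrt_ge1)
  have hm_ub : (m' : ℝ) ≤ Real.sqrt ((k:ℝ) * s) := Nat.floor_le (Real.sqrt_nonneg _)
  have hm_lb2 : Real.sqrt ((k:ℝ) * s) ≤ 2 * m' := by
    have h1 := Nat.lt_floor_add_one (Real.sqrt ((k:ℝ) * s))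
    have h2 : (1:ℝ) ≤ (m':ℝ) := by exact_mod_cast hm1
    rw [← hm_def] at h1
    push_cast at h1
    linarith
  have hi2_lb : (k:ℝ) * xs - 1 < (i2:ℝ) := by
    have := Nat.lt_floor_add_one ((k:ℝ) * xs)
    rw [← hi2_def] at this
    push_cast at this
    linarith
  have hi2_ub : (i2:ℝ) ≤ (k:ℝ) * xs := Nat.floor_le (by positivity)
  have hi2k : i2 < k := by
    rw [hi2_def]
    rw [Nat.floor_lt (by positivity)]
    nlinarith
  clear_value i2 m'
  have hxs_lb : 20 / 53 ≤ xs := by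
    rw [hxs_def, le_inv_comm₀ (by norm_num) h1s]
    linarith
  have hxsk : 20 / 53 * (k:ℝ) ≤ (k:ℝ) * xs := by nlinarith [hxs_lb, hkpos]
  have hsqrt_small : Real.sqrt ((k:ℝ) * s) ≤ (k:ℝ) * xs - 1 := by
    have h0 : (0:ℝ) ≤ 20/53 * (k:ℝ) - 1 := by linarith
    have h2 : ((20/53:ℝ) * k - 1)^2 ≤ ((k:ℝ) * xs - 1)^2 :=
      pow_le_pow_left₀ h0 (by linarith) 2
    have h3 : (k:ℝ) * s ≤ 33/20 * k := by nlinarith [hs_ub, hkpos]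
    have h4 : (33/20:ℝ) * k ≤ ((20/53:ℝ) * k - 1)^2 := by nlinarith [hkR]
    calc Real.sqrt ((k:ℝ)*s) ≤ Real.sqrt (((k:ℝ)*xs - 1)^2) := Real.sqrt_le_sqrt (by linarith)
      _ = (k:ℝ)*xs - 1 := Real.sqrt_sq (by linarith)
  have hi2m : m' ≤ i2 := by
    have : (m':ℝ) ≤ (i2:ℝ) := by linarith [hm_ub, hsqrt_small, hi2_lb]
    exact_mod_cast this
  -- the window
  set W : Finset ℕ := Finset.Ioc (i2 - m') i2 with hW_def
  have hWcard : W.card = m' := by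
    rw [hW_def, Nat.card_Ioc, Nat.sub_sub_self hi2m]
  have hWsub : W ⊆ Finset.Ico 1 k := by
    intro i hi
    rw [hW_def, Finset.mem_Ioc] at hi
    rw [Finset.mem_Ico]
    omega
  -- the main quantity
  have hbase_pos : (0:ℝ) < (1 + s)^2 / q := by positivity
  set B : ℝ := ((1 + s)^2/q)^k with hB_def
  have hB_pos : 0 < B := by rw [hB_def]; positivity
  have hBval : B = Real.exp ((k:ℝ) * Real.log ((1 + s)^2/q)) := by
    rw [hB_def, ← Real.rpow_natCast ((1+s)^2/q) k, Real.rpow_def_of_pos hbase_pos]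
    ring_nf
  have hlogB : Real.log ((1 + s)^2/q) = 2*Real.log (1+s) - 2*Real.log s + (k:ℝ)/N := by
    rw [Real.log_div (by positivity) hq0.ne', Real.log_pow]
    push_cast
    linarith [hlogs]
  have hq_inv : Real.log q⁻¹ = (k:ℝ)/N - 2*Real.log s := by
    rw [Real.log_inv]; linarith [hlogs]
  -- per-term lower bound
  have hterm : ∀ i ∈ W, (2*s)⁻¹ * (Real.exp (-15) * B) ≤
      (((i : ℝ) / k) * (1 - (i : ℝ) / k))⁻¹ *
      Real.exp ((k : ℝ) * (((i : ℝ) / k) * Real.log q⁻¹ + 2 * entropyH ((i : ℝ) / k) +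
        ((k : ℝ) / N) * (1 - (i : ℝ) / k))) := by
    intro i hi
    rw [hW_def, Finset.mem_Ioc] at hi
    obtain ⟨hiL, hiR⟩ := hi
    have hi1 : 1 ≤ i := by omega
    have hiR1 : (1:ℝ) ≤ (i:ℝ) := by exact_mod_cast hi1
    have hiU : (i:ℝ) ≤ (k:ℝ) * xs := by
      have h1 : (i:ℝ) ≤ (i2:ℝ) := by exact_mod_cast hiR
      linarith [hi2_ub]
    have hiL' : (k:ℝ)*xs - (m':ℝ) ≤ (i:ℝ) := by
      have h1 : i2 - m' + 1 ≤ i := by omega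
      have h2 : ((i2 - m' + 1 : ℕ):ℝ) ≤ (i:ℝ) := by exact_mod_cast h1
      rw [Nat.cast_add, Nat.cast_sub hi2m] at h2
      push_cast at h2
      linarith [hi2_lb]
    set x : ℝ := (i:ℝ)/k with hx_def
    have hx_pos : 0 < x := by rw [hx_def]; positivity
    have hx_le : x ≤ xs := by
      rw [hx_def, div_le_iff₀ hkpos]
      linarith
    have hx1 : x < 1 := lt_of_le_of_lt hx_le hxs1
    have hd0 : 0 ≤ xs - x := by linarith
    have hkxi : (k:ℝ)*xs - (i:ℝ) ≤ Real.sqrt ((k:ℝ)*s) := by linarith [hm_ub]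
    have hkxi0 : 0 ≤ (k:ℝ)*xs - (i:ℝ) := by linarith
    have hsq : ((k:ℝ)*xs - (i:ℝ))^2 ≤ (k:ℝ)*s := by
      have h := pow_le_pow_left₀ hkxi0 hkxi 2
      rwa [Real.sq_sqrt (by positivity : (0:ℝ) ≤ (k:ℝ)*s)] at h
    have hd2 : (xs - x)^2 ≤ s/k := by
      have hxx : xs - x = ((k:ℝ)*xs - (i:ℝ))/k := by
        rw [hx_def]
        field_simp
      rw [hxx, div_pow, div_le_div_iff₀ (by positivity) hkpos]
      calc ((k:ℝ)*xs - (i:ℝ))^2 * k ≤ ((k:ℝ)*s)*k := mul_le_mul_of_nonneg_right hsq hkpos.le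
        _ = s*(k:ℝ)^2 := by ring
    have hsk_le : s/(k:ℝ) ≤ s*s := by
      have := mul_le_mul_of_nonneg_left hs_lb hs_pos.le
      calc s/(k:ℝ) = s * ((k:ℝ))⁻¹ := by ring
        _ ≤ s * s := this
    have hds : xs - x ≤ s := by
      have h1 : (xs - x)^2 ≤ s^2 := by
        have : s*s = s^2 := by ring
        linarith [hd2, hsk_le]
      exact (pow_le_pow_iff_left₀ hd0 hs_pos.le two_ne_zero).1 h1
    -- prefactor
    have hx1x_pos : 0 < x*(1-x) := mul_pos hx_pos (by linarith)
    have h1xs_le : 1 - xs ≤ s := by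
      rw [h1xs, div_le_iff₀ h1s]
      have h2 : s*1 ≤ s*(1+s) := mul_le_mul_of_nonneg_left (by linarith) hs_pos.le
      linarith
    have hx1x_ub : x*(1-x) ≤ 2*s := by
      have h1 : x*(1-x) ≤ 1*(1-x) := mul_le_mul_of_nonneg_right hx1.le (by linarith)
      linarith [h1xs_le, hds]
    have hpref : (2*s)⁻¹ ≤ (x*(1-x))⁻¹ := by
      apply inv_anti₀ hx1x_pos hx1x_ub
    -- exponent lower bound
    have hH := entropy_taylor hx_pos hx1 hxs_pos hxs1
    rw [hlogdiff] at hH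
    have herr : (x - xs)^2/(xs*(1-xs)) ≤ (1+s)^2/k := by
      rw [hxs1xs, div_le_div_iff₀ (by positivity) hkpos]
      have hflip : (x - xs)^2 = (xs - x)^2 := by ring
      have hgoal2 : (1+s)^2 * (s/(1+s)^2) = s := by field_simp
      rw [hflip, hgoal2]
      calc (xs - x)^2 * k ≤ (s/k)*k := mul_le_mul_of_nonneg_right hd2 hkpos.le
        _ = s := by field_simp
    have hDelta : (2*Real.log (1+s) - 2*Real.log s) - (2*entropyH x - 2*x*Real.log s)
        ≤ 2*((1+s)^2/k) := by linarith [hH, herr, hHxs]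
    have hDk := mul_le_mul_of_nonneg_left hDelta hkpos.le
    rw [mul_sub] at hDk
    have hIdK : (k:ℝ) * (2*((1+s)^2/k)) = 2*(1+s)^2 := by field_simp
    rw [hIdK] at hDk
    have h15 : 2*(1+s)^2 ≤ 15 := by
      have h1 : (1+s)^2 ≤ (53/20:ℝ)^2 := pow_le_pow_left₀ (by linarith) (by linarith) 2
      norm_num at h1
      linarith
    have hcore : (k:ℝ)*(2*Real.log (1+s) - 2*Real.log s) - 15
        ≤ (k:ℝ)*(2*entropyH x - 2*x*Real.log s) := by linarith
    have hElb : (k:ℝ) * Real.log ((1+s)^2/q) - 15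
        ≤ (k:ℝ)*(x*Real.log q⁻¹ + 2*entropyH x + ((k:ℝ)/N)*(1-x)) := by
      calc (k:ℝ) * Real.log ((1+s)^2/q) - 15
          = (k:ℝ)*(2*Real.log (1+s) - 2*Real.log s) + (k:ℝ)*((k:ℝ)/N) - 15 := by
            rw [hlogB]; ring
        _ ≤ (k:ℝ)*(2*entropyH x - 2*x*Real.log s) + (k:ℝ)*((k:ℝ)/N) := by linarith
        _ = (k:ℝ)*(x*Real.log q⁻¹ + 2*entropyH x + ((k:ℝ)/N)*(1-x)) := by
            rw [hq_inv]; ring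
    calc (2*s)⁻¹ * (Real.exp (-15) * B)
        = (2*s)⁻¹ * Real.exp ((k:ℝ) * Real.log ((1+s)^2/q) - 15) := by
          rw [hBval, ← Real.exp_add]
          congr 2
          ring
      _ ≤ (x*(1-x))⁻¹ *
          Real.exp ((k : ℝ) * (x * Real.log q⁻¹ + 2 * entropyH x + ((k : ℝ) / N) * (1 - x))) := by
          apply mul_le_mul hpref (Real.exp_le_exp.2 hElb) (Real.exp_pos _).le
          positivity
  -- sum over the window
  have hsum1 : (m':ℝ) * ((2*s)⁻¹ * (Real.exp (-15) * B)) ≤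
      ∑ i ∈ W, (((i : ℝ) / k) * (1 - (i : ℝ) / k))⁻¹ *
        Real.exp ((k : ℝ) * (((i : ℝ) / k) * Real.log q⁻¹ + 2 * entropyH ((i : ℝ) / k) +
          ((k : ℝ) / N) * (1 - (i : ℝ) / k))) := by
    have h := Finset.card_nsmul_le_sum W
      (fun i => (((i : ℝ) / k) * (1 - (i : ℝ) / k))⁻¹ *
        Real.exp ((k : ℝ) * (((i : ℝ) / k) * Real.log q⁻¹ + 2 * entropyH ((i : ℝ) / k) +
          ((k : ℝ) / N) * (1 - (i : ℝ) / k))))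
      ((2*s)⁻¹ * (Real.exp (-15) * B)) hterm
    rwa [hWcard, nsmul_eq_mul] at h
  have hsum2 : ∑ i ∈ W, (((i : ℝ) / k) * (1 - (i : ℝ) / k))⁻¹ *
        Real.exp ((k : ℝ) * (((i : ℝ) / k) * Real.log q⁻¹ + 2 * entropyH ((i : ℝ) / k) +
          ((k : ℝ) / N) * (1 - (i : ℝ) / k))) ≤ ledouxSum q N k := by
    rw [ledouxSum]
    apply Finset.sum_le_sum_of_subset_of_nonneg hWsub
    intro i hi _
    rw [Finset.mem_Ico] at hi
    have h1 : (1:ℝ) ≤ (i:ℝ) := by exact_mod_cast hi.1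
    have h2 : (i:ℝ) < (k:ℝ) := by exact_mod_cast hi.2
    have hxp : 0 < (i:ℝ)/k := by positivity
    have hx1' : (i:ℝ)/k < 1 := by rw [div_lt_one hkpos]; exact h2
    have : 0 < ((i:ℝ)/k) * (1 - (i:ℝ)/k) := mul_pos hxp (by linarith)
    positivity
  -- the final comparison
  have hfinal : (Real.exp 20)⁻¹ * q ^ (-(1:ℝ)/4) * (k:ℝ) ^ ((1:ℝ)/2) * B ≤
      (m':ℝ) * ((2*s)⁻¹ * (Real.exp (-15) * B)) := by
    have hrw : (m':ℝ) * ((2*s)⁻¹ * (Real.exp (-15) * B))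
        = ((m':ℝ) * ((2*s)⁻¹ * Real.exp (-15))) * B := by ring
    rw [hrw]
    apply mul_le_mul_of_nonneg_right ?_ hB_pos.le
    set u := Real.sqrt s with hu_def
    set v := Real.sqrt (k:ℝ) with hv_def
    have hu_pos : 0 < u := Real.sqrt_pos.2 hs_pos
    have hv_pos : 0 < v := Real.sqrt_pos.2 hkpos
    have huu : u*u = s := Real.mul_self_sqrt hs_pos.le
    have hvv : v*v = (k:ℝ) := Real.mul_self_sqrt hkpos.le
    have hkv : (k:ℝ)^((1:ℝ)/2) = v := by
      rw [hv_def, Real.sqrt_eq_rpow]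
    have hvu : Real.sqrt ((k:ℝ)*s) = v*u := by
      rw [hu_def, hv_def, ← Real.sqrt_mul hkpos.le]
    have hm_ge : v*u/2 ≤ (m':ℝ) := by
      rw [← hvu] at *
      linarith [hm_lb2]
    set r := q ^ ((1:ℝ)/4) with hr_def
    have hr_pos : 0 < r := Real.rpow_pos_of_pos hq0 _
    have hrr : r*r = q^((1:ℝ)/2) := by
      rw [hr_def, ← Real.rpow_add hq0]
      norm_num
    have hqneg : q ^ (-(1:ℝ)/4) = r⁻¹ := by
      rw [hr_def, show -(1:ℝ)/4 = -((1:ℝ)/4) by norm_num, Real.rpow_neg hq0.le]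
    have hexp14 : Real.exp ((1:ℝ)/4) * Real.exp ((1:ℝ)/4) = Real.exp ((1:ℝ)/2) := by
      rw [← Real.exp_add]; norm_num
    have hue : u ≤ r * Real.exp (1/4) := by
      have h1 : u*u ≤ (r*Real.exp ((1:ℝ)/4))*(r*Real.exp ((1:ℝ)/4)) := by
        rw [huu]
        calc s = q^((1:ℝ)/2)*Real.exp ((k:ℝ)/(2*(N:ℝ))) := hs_def
          _ ≤ q^((1:ℝ)/2)*Real.exp ((1:ℝ)/2) := by
              apply mul_le_mul_of_nonneg_left _ (Real.rpow_nonneg hq0.le _)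
              exact hexphalf
          _ = (r*Real.exp ((1:ℝ)/4))*(r*Real.exp ((1:ℝ)/4)) := by
              calc q^((1:ℝ)/2)*Real.exp ((1:ℝ)/2)
                  = (r*r) * (Real.exp ((1:ℝ)/4) * Real.exp ((1:ℝ)/4)) := by rw [hrr, hexp14]
                _ = (r*Real.exp ((1:ℝ)/4))*(r*Real.exp ((1:ℝ)/4)) := by ring
      have hre_pos : (0:ℝ) < r * Real.exp ((1:ℝ)/4) := by positivity
      have h2 : s ≤ (r * Real.exp ((1:ℝ)/4))^2 := by
        calc s = u*u := huu.symm
          _ ≤ (r * Real.exp ((1:ℝ)/4))*(r * Real.exp ((1:ℝ)/4)) := h1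
          _ = (r * Real.exp ((1:ℝ)/4))^2 := by ring
      calc u = Real.sqrt s := hu_def
        _ ≤ Real.sqrt ((r*Real.exp ((1:ℝ)/4))^2) := Real.sqrt_le_sqrt h2
        _ = r*Real.exp ((1:ℝ)/4) := Real.sqrt_sq hre_pos.le
    have hnum : 4 * Real.exp ((1:ℝ)/4) ≤ Real.exp 20 * Real.exp (-15) := by
      have e2 : (3:ℝ) ≤ Real.exp 2 := by linarith [Real.add_one_le_exp (2:ℝ)]
      have e3 : (4:ℝ) ≤ Real.exp 3 := by linarith [Real.add_one_le_exp (3:ℝ)]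
      have e5 : Real.exp 20 * Real.exp (-15) = Real.exp 2 * Real.exp 3 := by
        rw [← Real.exp_add, ← Real.exp_add]; norm_num
      have e14 : Real.exp ((1:ℝ)/4) ≤ Real.exp 1 := Real.exp_le_exp.2 (by norm_num)
      have e23 : (12:ℝ) ≤ Real.exp 2 * Real.exp 3 := by
        calc (12:ℝ) = 3*4 := by norm_num
          _ ≤ Real.exp 2 * Real.exp 3 :=
            mul_le_mul e2 e3 (by norm_num) (Real.exp_pos 2).le
      have e1b : Real.exp 1 ≤ 3 := by linarith [Real.exp_one_lt_d9]
      linarith [e5]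
    rw [hkv, hqneg]
    have hur : u * r⁻¹ ≤ Real.exp ((1:ℝ)/4) := by
      have h1 : u/r ≤ Real.exp ((1:ℝ)/4) := by
        rw [div_le_iff₀ hr_pos, mul_comm]
        exact hue
      calc u * r⁻¹ = u/r := by ring
        _ ≤ _ := h1
    have hstep : (Real.exp 20)⁻¹ * r⁻¹ * v ≤ (v*u/2) * ((2*s)⁻¹ * Real.exp (-15)) := by
      have hrhs : (v*u/2) * ((2*s)⁻¹ * Real.exp (-15)) = v * Real.exp (-15) * u/(4*s) := by
        field_simp
        ring
      rw [hrhs, le_div_iff₀ (by positivity)]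
      have h2 : 4*(u*r⁻¹) ≤ Real.exp 20 * Real.exp (-15) := by
        have h1 : 4*(u*r⁻¹) ≤ 4*Real.exp ((1:ℝ)/4) := by linarith
        linarith [hnum]
      have h4 : (Real.exp 20 * Real.exp (-15)) * (Real.exp 20)⁻¹ = Real.exp (-15) := by
        rw [mul_comm, ← mul_assoc, inv_mul_cancel₀ (Real.exp_pos 20).ne', one_mul]
      have huus : u * u = s := huu
      calc (Real.exp 20)⁻¹ * r⁻¹ * v * (4*s)
          = v * u * ((4*(u*r⁻¹)) * (Real.exp 20)⁻¹) := by rw [← huus]; ring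
        _ ≤ v * u * ((Real.exp 20 * Real.exp (-15)) * (Real.exp 20)⁻¹) := by
            apply mul_le_mul_of_nonneg_left _ (by positivity)
            apply mul_le_mul_of_nonneg_right h2 (by positivity)
        _ = v * Real.exp (-15) * u := by rw [h4]; ring
    calc (Real.exp 20)⁻¹ * r⁻¹ * v ≤ (v*u/2) * ((2*s)⁻¹ * Real.exp (-15)) := hstep
      _ ≤ (m':ℝ) * ((2*s)⁻¹ * Real.exp (-15)) := by
          apply mul_le_mul_of_nonneg_right hm_ge (by positivity)
  linarith [hfinal, hsum1, hsum2]
end
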